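/- arXiv:2312.13805 — 6 statements merged into one kernel-verified Lean document; each statement's English description precedes it below -/
import Mathlib

section
/- Let n > m ≥ 1 be coprime integers and x₀ = (m/n)^{1/(n−m)}. Let u > v be real numbers with u^n − u^m = v^n − v^m. Then v < x₀; moreover, if u ≥ 1 then v ≤ 0; and if n is odd and m is even then u ≤ 1. -/
open MeasureTheory Real Set Filter Asymptotics

noncomputable def lap (p : ℝ → ℝ) (l : ℝ) : ℝ :=
  ∫ x in Set.Ioi (0:ℝ), Real.exp (-l * x) * p x

def ExpOrder (p : ℝ → ℝ) : Prop :=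
  ∃ c > (0:ℝ), ∃ C > (0:ℝ), ∀ x ≥ (0:ℝ), |p x| ≤ C * Real.exp (c * x)

theorem stmt8 (n m : ℕ) (hm : 1 ≤ m) (hmn : m < n) (hcop : Nat.Coprime n m)
    (u v : ℝ) (huv : v < u) (h : u ^ n - u ^ m = v ^ n - v ^ m) :
    v < ((m : ℝ) / n) ^ ((1 : ℝ) / ((n : ℝ) - m)) ∧
      (1 ≤ u → v ≤ 0) ∧ (Odd n → Even m → u ≤ 1) := by
  have hmpos : (0:ℝ) < m := by exact_mod_cast hm
  have hmn' : (m:ℝ) < n := by exact_mod_cast hmn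
  have hnpos : (0:ℝ) < n := by linarith
  have hnm : (0:ℝ) < (n:ℝ) - m := by linarith
  set c : ℝ := ((m : ℝ) / n) ^ ((1 : ℝ) / ((n : ℝ) - m)) with hc
  have hq : (0:ℝ) < (m:ℝ)/n := by positivity
  have hq1 : (m:ℝ)/n < 1 := (div_lt_one hnpos).mpr hmn'
  have hcpos : 0 < c := Real.rpow_pos_of_pos hq _
  have hc1 : c < 1 := Real.rpow_lt_one hq.le hq1 (by positivity)
  have hcpow : c ^ (n - m) = (m:ℝ)/n := by
    rw [hc, ← Real.rpow_natCast (((m : ℝ) / n) ^ ((1 : ℝ) / ((n : ℝ) - m))),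
      ← Real.rpow_mul hq.le, Nat.cast_sub hmn.le, one_div,
      inv_mul_cancel₀ hnm.ne', Real.rpow_one]
  have hmono : StrictMonoOn (fun x : ℝ => x ^ n - x ^ m) (Set.Ici c) := by
    apply strictMonoOn_of_deriv_pos (convex_Ici c)
    · exact ((continuous_pow n).sub (continuous_pow m)).continuousOn
    · intro x hx
      rw [interior_Ici] at hx
      have hx0 : 0 < x := hcpos.trans hx
      have hd : HasDerivAt (fun x : ℝ => x ^ n - x ^ m)
          ((n:ℝ) * x ^ (n-1) - (m:ℝ) * x ^ (m-1)) x :=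
        (hasDerivAt_pow n x).sub (hasDerivAt_pow m x)
      rw [hd.deriv]
      have hxpow : (m:ℝ)/n < x ^ (n - m) := by
        calc (m:ℝ)/n = c ^ (n-m) := hcpow.symm
        _ < x ^ (n-m) := pow_lt_pow_left₀ hx hcpos.le (by omega)
      have h1 : (m:ℝ) < x ^ (n-m) * n := by rwa [div_lt_iff₀ hnpos] at hxpow
      have h2 : x ^ (n-1) = x ^ (n-m) * x ^ (m-1) := by
        rw [← pow_add]; congr 1; omega
      have h3 : 0 < x ^ (m-1) := pow_pos hx0 _
      rw [h2]
      nlinarith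
  have part1 : v < c := by
    by_contra hvc
    push_neg at hvc
    have := hmono hvc (hvc.trans huv.le) huv
    simp only at this
    linarith
  refine ⟨part1, ?_, ?_⟩
  · intro hu
    by_contra hv
    push_neg at hv
    have hfu : u ^ m ≤ u ^ n := pow_le_pow_right₀ hu hmn.le
    rcases lt_or_ge v 1 with hv1 | hv1
    · have : v ^ n < v ^ m := pow_lt_pow_right_of_lt_one₀ hv hv1 hmn
      linarith
    · have := hmono (hc1.le.trans hv1) ((hc1.le.trans hv1).trans huv.le) huv
      simp only at this
      linarith
  · intro hodd heven
    by_contra hu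
    push_neg at hu
    have hfu : u ^ m < u ^ n := pow_lt_pow_right₀ hu hmn
    rcases lt_or_ge v 0 with hv | hv
    · have h1 : v ^ n < 0 := hodd.pow_neg hv
      have h2 : 0 ≤ v ^ m := heven.pow_nonneg v
      linarith
    · rcases lt_or_ge v 1 with hv1 | hv1
      · have : v ^ n ≤ v ^ m := pow_le_pow_of_le_one hv hv1.le hmn.le
        linarith
      · have := hmono (hc1.le.trans hv1) ((hc1.le.trans hv1).trans huv.le) huv
        simp only at this
        linarith
end

section
/- Let p, q : [0,∞) → ℝ be right analytic functions of exponential order with p(0) = 1, and let n > m ≥ 1 be coprime integers with x₀ = (m/n)^{1/(n−m)}. Suppose p(t) > x₀ for all t > 0 and q(t) ≥ x₀ for all t > 0, and suppose that inf{x > 0 : p(x) ≠ 0} = 0. If ∫₀^∞ e^{-λx} p(x)^n dx / ∫₀^∞ e^{-λx} p(x)^m dx = ∫₀^∞ e^{-λx} q(x)^n dx / ∫₀^∞ e^{-λx} q(x)^m dx for all sufficiently large λ, then p(x) = q(x) for all x ≥ 0. -/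
open MeasureTheory Real Set Filter Asymptotics

open scoped Topology

def RightAnalytic (p : ℝ → ℝ) : Prop :=
  ∀ x ≥ (0:ℝ), ∃ a : ℕ → ℝ, ∃ ε > (0:ℝ), ∀ t ∈ Set.Ico x (x + ε),
    HasSum (fun i => a i * (t - x) ^ i) (p t)

lemma PS {c : ℕ → ℝ} {ε : ℝ} (hε : 0 < ε) {f : ℝ → ℝ}
    (h : ∀ u ∈ Set.Ico (0:ℝ) ε, HasSum (fun i => c i * u ^ i) (f u))
    (j : ℕ) (hj : ∀ i < j, c i = 0) :
    Filter.Tendsto (fun u => f u / u ^ j) (𝓝[>] (0:ℝ)) (𝓝 (c j)) := by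
  set ρ := ε/2 with hρdef
  have hρ : 0 < ρ := by positivity
  have hsum := (h ρ ⟨hρ.le, by simp only [hρdef]; linarith⟩).summable
  have habs : Summable (fun i => |c i * ρ ^ i|) := hsum.abs
  set M := ∑' i, |c i * ρ ^ i| with hM
  have hMnn : 0 ≤ M := tsum_nonneg (fun i => abs_nonneg _)
  have hbound : ∀ i, |c i| ≤ M / ρ ^ i := by
    intro i
    have h1 : |c i * ρ ^ i| ≤ M := Summable.le_tsum habs i (fun k _ => abs_nonneg _)
    rw [abs_mul, abs_of_pos (pow_pos hρ i)] at h1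
    rw [le_div_iff₀ (pow_pos hρ i)]
    exact h1
  set K := 2 * M / ρ ^ (j+1) with hKdef
  have key : ∀ u : ℝ, 0 < u → u < ρ/2 → |f u / u ^ j - c j| ≤ K * u := by
    intro u hu0 huρ
    have huε : u ∈ Set.Ico (0:ℝ) ε := ⟨hu0.le, by simp only [hρdef] at huρ ⊢; linarith⟩
    have h0 := h u huε
    have hzero : ∑ i ∈ Finset.range j, c i * u ^ i = 0 :=
      Finset.sum_eq_zero (fun i hi => by rw [hj i (Finset.mem_range.1 hi), zero_mul])
    have h1 : HasSum (fun k => c (k + j) * u ^ (k + j)) (f u) := by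
      refine (hasSum_nat_add_iff (f := fun i => c i * u ^ i) j).2 ?_
      rwa [hzero, add_zero]
    have hupj : (u:ℝ) ^ j ≠ 0 := (pow_pos hu0 j).ne'
    have h2 : HasSum (fun k => c (k + j) * u ^ k) (f u / u ^ j) := by
      have heq : (fun k => c (k + j) * u ^ (k + j) / u ^ j) = (fun k => c (k + j) * u ^ k) := by
        funext k; rw [pow_add]; field_simp
      exact heq ▸ h1.div_const (u ^ j)
    have h3 : HasSum (fun k => c (k + 1 + j) * u ^ (k + 1)) (f u / u ^ j - c j) := by
      refine (hasSum_nat_add_iff (f := fun k => c (k + j) * u ^ k) 1).2 ?_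
      simpa using h2
    have hlt1 : u / ρ < 1 := (div_lt_one hρ).2 (by linarith)
    have hb : ∀ k, |c (k+1+j) * u^(k+1)| ≤ (M / ρ^(j+1) * u) * (u/ρ)^k := by
      intro k
      rw [abs_mul, abs_of_pos (pow_pos hu0 _)]
      have e1 : (k+1+j) = (j+1)+k := by omega
      calc |c (k+1+j)| * u^(k+1) ≤ (M / ρ^(k+1+j)) * u^(k+1) :=
            mul_le_mul_of_nonneg_right (hbound _) (pow_nonneg hu0.le _)
        _ = (M / ρ^(j+1) * u) * (u/ρ)^k := by
            rw [e1, pow_add, div_pow, pow_succ]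
            field_simp
            have hρk : ρ ^ k * ρ⁻¹ ^ k = 1 := by rw [← mul_pow, mul_inv_cancel₀ hρ.ne', one_pow]
            linear_combination (-(M*u*u^k)) * hρk
    have hgeo : Summable (fun k : ℕ => (M / ρ^(j+1) * u) * (u/ρ)^k) :=
      (summable_geometric_of_lt_one (by positivity) hlt1).mul_left _
    have habs3 : Summable (fun k => |c (k+1+j) * u^(k+1)|) := h3.summable.abs
    have hle : |f u / u ^ j - c j| ≤ (M / ρ^(j+1) * u) * (1 - u/ρ)⁻¹ := by
      calc |f u/u^j - c j| = |∑' k, c (k+1+j)*u^(k+1)| := by rw [h3.tsum_eq]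
        _ ≤ ∑' k, |c (k+1+j)*u^(k+1)| := by
            have := norm_tsum_le_tsum_norm (f := fun k => c (k+1+j)*u^(k+1))
              (by simpa only [Real.norm_eq_abs] using habs3)
            simpa only [Real.norm_eq_abs] using this
        _ ≤ ∑' k, (M/ρ^(j+1)*u)*(u/ρ)^k := Summable.tsum_le_tsum hb habs3 hgeo
        _ = (M/ρ^(j+1)*u) * ∑' k, (u/ρ)^k := by rw [tsum_mul_left]
        _ = _ := by rw [tsum_geometric_of_lt_one (by positivity) hlt1]
    have hhalf : (1 - u/ρ)⁻¹ ≤ 2 := by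
      have h2' : (1:ℝ)/2 ≤ 1 - u/ρ := by
        have : u / ρ ≤ 1/2 := by
          rw [div_le_div_iff₀ hρ (by norm_num)]
          linarith
        linarith
      calc (1 - u/ρ)⁻¹ ≤ ((1:ℝ)/2)⁻¹ := by
            apply inv_anti₀ (by norm_num) h2'
        _ = 2 := by norm_num
    calc |f u / u ^ j - c j| ≤ (M / ρ^(j+1) * u) * (1 - u/ρ)⁻¹ := hle
      _ ≤ (M / ρ^(j+1) * u) * 2 := by
          apply mul_le_mul_of_nonneg_left hhalf (by positivity)
      _ = K * u := by rw [hKdef]; ring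
  have hKt : Tendsto (fun u : ℝ => K * u) (𝓝[>] (0:ℝ)) (𝓝 0) := by
    have : Tendsto (fun u : ℝ => K * u) (𝓝 (0:ℝ)) (𝓝 (K * 0)) :=
      (continuous_const.mul continuous_id).tendsto 0
    simpa using this.mono_left nhdsWithin_le_nhds
  have hz : Tendsto (fun u => f u / u ^ j - c j) (𝓝[>] (0:ℝ)) (𝓝 0) := by
    apply squeeze_zero_norm' _ hKt
    filter_upwards [Ioo_mem_nhdsGT_of_mem (show (0:ℝ) ∈ Set.Ico 0 (ρ/2) from ⟨le_rfl, by positivity⟩)] with u hu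
    exact key u hu.1 hu.2
  have := hz.add (tendsto_const_nhds (x := c j))
  simpa using this

lemma PS_val {c : ℕ → ℝ} {ε : ℝ} (hε : 0 < ε) {f : ℝ → ℝ}
    (h : ∀ u ∈ Set.Ico (0:ℝ) ε, HasSum (fun i => c i * u ^ i) (f u)) : f 0 = c 0 := by
  have h0 := h 0 ⟨le_rfl, by linarith⟩
  have h1 : HasSum (fun i => c i * (0:ℝ) ^ i) ((fun i => c i * (0:ℝ) ^ i) 0) :=
    hasSum_single 0 (fun i hi => by simp [zero_pow hi])
  simpa using h0.unique (by simpa using h1)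

lemma meas_comp_countable {g : ℝ → ℝ} (hg : Measurable g) (hcount : (Set.range g).Countable)
    (f : ℝ → ℝ) : Measurable (f ∘ g) := by
  intro t _
  have : (f ∘ g) ⁻¹' t = g ⁻¹' ((f ⁻¹' t) ∩ Set.range g) := by
    ext x; simp [Set.mem_preimage, Function.comp]
  rw [this]
  exact hg ((hcount.mono (Set.inter_subset_right)).measurableSet)

lemma meas_of_rightCont (f : ℝ → ℝ) (hf : ∀ x, ContinuousWithinAt f (Set.Ici x) x) :
    Measurable f := by
  have hg : ∀ k : ℕ, Measurable (fun x : ℝ => ((⌊x * 2^k⌋ : ℝ) + 1) / 2^k) := by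
    intro k
    apply Measurable.div_const
    apply Measurable.add_const
    have h1 : Measurable (fun x : ℝ => ⌊x * 2^k⌋) :=
      Int.measurable_floor.comp (measurable_id.mul_const _)
    exact (measurable_of_countable (fun z : ℤ => (z : ℝ))).comp h1
  have hcount : ∀ k : ℕ, (Set.range (fun x : ℝ => ((⌊x * 2^k⌋ : ℝ) + 1) / 2^k)).Countable := by
    intro k
    apply Set.Countable.mono _ (Set.countable_range (fun z : ℤ => ((z:ℝ) + 1) / 2^k))
    rintro y ⟨x, rfl⟩
    exact ⟨⌊x * 2^k⌋, rfl⟩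
  apply measurable_of_tendsto_metrizable
    (f := fun k : ℕ => f ∘ (fun x : ℝ => ((⌊x * 2^k⌋ : ℝ) + 1) / 2^k))
  · intro k; exact meas_comp_countable (hg k) (hcount k) f
  · rw [tendsto_pi_nhds]
    intro x
    apply (hf x).tendsto.comp
    rw [tendsto_nhdsWithin_iff]
    constructor
    · have hub : ∀ k : ℕ, ((⌊x * 2^k⌋ : ℝ) + 1) / 2^k ≤ x + (1/2)^k := by
        intro k
        rw [div_le_iff₀ (by positivity)]
        have := Int.floor_le (x * 2^k)
        have h2 : ((1:ℝ)/2)^k * 2^k = 1 := by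
          rw [div_pow, one_pow, div_mul_cancel₀]
          positivity
        nlinarith [this]
      have hlb : ∀ k : ℕ, x ≤ ((⌊x * 2^k⌋ : ℝ) + 1) / 2^k := by
        intro k
        rw [le_div_iff₀ (by positivity)]
        have := Int.lt_floor_add_one (x * 2^k)
        linarith
      have h1 : Tendsto (fun k : ℕ => x + (1/2:ℝ)^k) atTop (𝓝 (x + 0)) :=
        tendsto_const_nhds.add (tendsto_pow_atTop_nhds_zero_of_lt_one (by norm_num) (by norm_num))
      rw [add_zero] at h1
      exact tendsto_of_tendsto_of_tendsto_of_le_of_le tendsto_const_nhds h1 hlb hub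
    · filter_upwards with k
      rw [Set.mem_Ici, le_div_iff₀ (by positivity)]
      have := Int.lt_floor_add_one (x * 2^k)
      linarith

lemma lap_integrable {f : ℝ → ℝ} (hf : Measurable f) {C c l : ℝ}
    (hb : ∀ x ≥ (0:ℝ), |f x| ≤ C * rexp (c * x)) (hl : c < l) :
    IntegrableOn (fun x => rexp (-l * x) * f x) (Set.Ioi 0) := by
  apply Integrable.mono' ((exp_neg_integrableOn_Ioi 0 (show 0 < l - c by linarith)).const_mul C)
  · exact ((Real.measurable_exp.comp (measurable_id.const_mul (-l))).mul hf).aestronglyMeasurable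
  · rw [ae_restrict_iff' measurableSet_Ioi]
    filter_upwards with x hx
    rw [Real.norm_eq_abs, abs_mul, abs_of_pos (exp_pos _)]
    calc rexp (-l*x) * |f x| ≤ rexp (-l*x) * (C * rexp (c*x)) :=
          mul_le_mul_of_nonneg_left (hb x (le_of_lt hx)) (exp_pos _).le
      _ = C * (rexp (-l*x) * rexp (c*x)) := by ring
      _ = C * rexp (-(l-c)*x) := by rw [← Real.exp_add]; congr 1; ring

lemma aux_pow_exp (k : ℕ) {δ : ℝ} (hδ : 0 < δ) :
    Tendsto (fun l : ℝ => l ^ k * rexp (-l * δ)) atTop (𝓝 0) := by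
  have h1 : Tendsto (fun l : ℝ => l * δ) atTop atTop :=
    Tendsto.atTop_mul_const hδ tendsto_id
  have h2 := (tendsto_pow_mul_exp_neg_atTop_nhds_zero k).comp h1
  have h3 : (fun l : ℝ => l ^ k * rexp (-l * δ))
      = fun l => ((l*δ)^k * rexp (-(l*δ))) * ((δ^k)⁻¹) := by
    funext l
    rw [mul_pow, neg_mul]
    field_simp
  rw [h3]
  simpa using h2.mul_const ((δ^k)⁻¹)

lemma watson (f : ℝ → ℝ) (hf : Measurable f) {C c : ℝ} (hc : 0 < c)
    (hC : ∀ x ≥ (0:ℝ), |f x| ≤ C * rexp (c * x)) {s : ℝ} (hs : 0 ≤ s)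
    (hvan : ∀ x ∈ Set.Ioo (0:ℝ) s, f x = 0) (j : ℕ) (L : ℝ)
    (hL : Tendsto (fun u => f (s + u) / u ^ j) (𝓝[>] (0:ℝ)) (𝓝 L)) :
    Tendsto (fun l => rexp (l * s) * l ^ (j+1) * ∫ x in Set.Ioi (0:ℝ), rexp (-l * x) * f x)
      atTop (𝓝 (L * (j.factorial : ℝ))) := by
  set fs : ℝ → ℝ := fun u => f (s + u) with hfs_def
  have hfs_meas : Measurable fs := hf.comp (measurable_const.add measurable_id)
  have hCs : ∀ u ≥ (0:ℝ), |fs u| ≤ (C * rexp (c*s)) * rexp (c * u) := by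
    intro u hu
    have := hC (s + u) (by linarith)
    calc |fs u| ≤ C * rexp (c * (s + u)) := this
      _ = (C * rexp (c*s)) * rexp (c*u) := by rw [mul_add, Real.exp_add]; ring
  -- choose δ with |fs u / u^j| ≤ |L| + 1 on (0, δ]
  obtain ⟨δ₀, hδ₀, hδ₀'⟩ := Metric.tendsto_nhdsWithin_nhds.mp hL 1 one_pos
  set δ := δ₀ / 2 with hδdef
  have hδ : 0 < δ := by positivity
  have hM : ∀ u : ℝ, 0 < u → u ≤ δ → |fs u / u ^ j| ≤ |L| + 1 := by
    intro u hu0 hu1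
    have h1 : dist (fs u / u ^ j) L < 1 := by
      apply hδ₀' (Set.mem_Ioi.2 hu0)
      rw [Real.dist_eq, sub_zero, abs_of_pos hu0]
      simp only [hδdef] at hu1; linarith
    rw [Real.dist_eq] at h1
    calc |fs u / u ^ j| = |(fs u / u ^ j - L) + L| := by ring_nf
      _ ≤ |fs u / u ^ j - L| + |L| := abs_add_le _ _
      _ ≤ |L| + 1 := by linarith
  set I1 : ℝ → ℝ := fun l => ∫ u in Set.Ioc (0:ℝ) δ, rexp (-l * u) * fs u with hI1def
  set I2 : ℝ → ℝ := fun l => ∫ u in Set.Ioi δ, rexp (-l * u) * fs u with hI2def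
  -- the splitting identity
  have hEQ : ∀ l : ℝ, c < l →
      rexp (l * s) * l ^ (j+1) * ∫ x in Set.Ioi (0:ℝ), rexp (-l * x) * f x
        = l^(j+1) * I1 l + l^(j+1) * I2 l := by
    intro l hl
    have hl0 : 0 < l := lt_trans hc hl
    have hint : IntegrableOn (fun x => rexp (-l * x) * f x) (Set.Ioi 0) :=
      lap_integrable hf hC hl
    have hints : IntegrableOn (fun u => rexp (-l * u) * fs u) (Set.Ioi 0) :=
      lap_integrable hfs_meas hCs hl
    -- step a : restrict to Ioi s
    have ha : (∫ x in Set.Ioi (0:ℝ), rexp (-l * x) * f x)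
        = ∫ x in Set.Ioi s, rexp (-l * x) * f x := by
      rw [← Set.Ioc_union_Ioi_eq_Ioi hs,
        setIntegral_union (Set.Ioc_disjoint_Ioi le_rfl) measurableSet_Ioi
          (hint.mono_set Set.Ioc_subset_Ioi_self) (hint.mono_set (Set.Ioi_subset_Ioi hs))]
      have hz : (∫ x in Set.Ioc (0:ℝ) s, rexp (-l * x) * f x) = 0 := by
        rw [integral_Ioc_eq_integral_Ioo]
        rw [setIntegral_congr_fun measurableSet_Ioo
          (fun x hx => by rw [hvan x hx, mul_zero] : Set.EqOn _ (fun _ => (0:ℝ)) _)]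
        simp
      rw [hz, zero_add]
    -- step b : translate
    have hb : (∫ x in Set.Ioi s, rexp (-l * x) * f x)
        = rexp (-l * s) * ∫ u in Set.Ioi (0:ℝ), rexp (-l * u) * fs u := by
      have hpre : (fun x : ℝ => x + s) ⁻¹' (Set.Ioi s) = Set.Ioi 0 := by
        ext x; simp
      have := (measurePreserving_add_right volume s).setIntegral_preimage_emb
        (measurableEmbedding_addRight s) (fun x => rexp (-l * x) * f x) (Set.Ioi s)
      rw [hpre] at this
      rw [← this, ← integral_const_mul]
      apply setIntegral_congr_fun measurableSet_Ioi
      intro u _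
      simp only [hfs_def]
      rw [← mul_assoc, ← Real.exp_add]
      have : s + u = u + s := by ring
      rw [this]
      congr 2
      ring
    -- step c : split at δ
    have hcs : (∫ u in Set.Ioi (0:ℝ), rexp (-l * u) * fs u) = I1 l + I2 l := by
      rw [← Set.Ioc_union_Ioi_eq_Ioi hδ.le,
        setIntegral_union (Set.Ioc_disjoint_Ioi le_rfl) measurableSet_Ioi
          (hints.mono_set Set.Ioc_subset_Ioi_self) (hints.mono_set (Set.Ioi_subset_Ioi hδ.le))]
    rw [ha, hb, hcs]
    have hee : rexp (l*s) * rexp (-l*s) = 1 := by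
      rw [← Real.exp_add]
      norm_num
    calc rexp (l*s) * l^(j+1) * (rexp (-l*s) * (I1 l + I2 l))
        = (rexp (l*s) * rexp (-l*s)) * (l^(j+1) * (I1 l + I2 l)) := by ring
      _ = l^(j+1)*I1 l + l^(j+1)*I2 l := by rw [hee]; ring
  -- tail tends to zero
  have hT2 : Tendsto (fun l => l^(j+1) * I2 l) atTop (𝓝 0) := by
    apply squeeze_zero_norm'
      (a := fun l => (C * rexp (c*s) * rexp (c*δ)) * (l^(j+1) * rexp (-l * δ)))
    · filter_upwards [eventually_ge_atTop (c+1)] with l hl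
      have hl1 : c < l := by linarith
      have hl0 : 0 < l := lt_trans hc hl1
      have hlc : (1:ℝ) ≤ l - c := by linarith
      have hC0 : 0 ≤ C := by
        have := hC 0 le_rfl
        simp at this
        exact (abs_nonneg _).trans this
      have hintnorm : IntegrableOn (fun u => ‖rexp (-l * u) * fs u‖) (Set.Ioi δ) :=
        ((lap_integrable hfs_meas hCs hl1).mono_set (Set.Ioi_subset_Ioi hδ.le)).norm
      have hintbd : IntegrableOn (fun u => (C * rexp (c*s)) * rexp (-(l-c) * u)) (Set.Ioi δ) :=
        (exp_neg_integrableOn_Ioi δ (show 0 < l - c by linarith)).const_mul _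
      have hb1 : |I2 l| ≤ ∫ u in Set.Ioi δ, ‖rexp (-l * u) * fs u‖ := by
        rw [show I2 l = ∫ u in Set.Ioi δ, rexp (-l*u) * fs u from rfl, ← Real.norm_eq_abs]
        exact norm_integral_le_integral_norm _
      have hb2 : (∫ u in Set.Ioi δ, ‖rexp (-l * u) * fs u‖)
          ≤ ∫ u in Set.Ioi δ, (C * rexp (c*s)) * rexp (-(l-c) * u) := by
        apply integral_mono_ae hintnorm hintbd
        rw [Filter.EventuallyLE, ae_restrict_iff' measurableSet_Ioi]
        filter_upwards with u hu
        have hu0 : (0:ℝ) ≤ u := le_of_lt (lt_trans hδ hu)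
        rw [Real.norm_eq_abs, abs_mul, abs_of_pos (exp_pos _)]
        calc rexp (-l*u) * |fs u| ≤ rexp (-l*u) * ((C * rexp (c*s)) * rexp (c*u)) :=
              mul_le_mul_of_nonneg_left (hCs u hu0) (exp_pos _).le
          _ = (C * rexp (c*s)) * (rexp (-l*u) * rexp (c*u)) := by ring
          _ = (C * rexp (c*s)) * rexp (-(l-c)*u) := by
              rw [← Real.exp_add]; congr 1; ring
      have hval : (∫ u in Set.Ioi δ, (C * rexp (c*s)) * rexp (-(l-c) * u))
          = (C * rexp (c*s)) * ((l-c)⁻¹ * rexp (-((l-c) * δ))) := by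
        rw [integral_const_mul]
        congr 1
        have h1 := integral_comp_mul_left_Ioi (fun x => rexp (-x)) δ
          (show 0 < l - c by linarith)
        simp only [smul_eq_mul] at h1
        rw [integral_exp_neg_Ioi] at h1
        simp_rw [← neg_mul] at h1 ⊢
        exact h1
      rw [Real.norm_eq_abs, abs_mul, abs_of_pos (pow_pos hl0 _)]
      calc l^(j+1) * |I2 l| ≤ l^(j+1) * ((C * rexp (c*s)) * ((l-c)⁻¹ * rexp (-((l-c) * δ)))) := by
            apply mul_le_mul_of_nonneg_left _ (pow_pos hl0 _).le
            rw [← hval]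
            exact le_trans hb1 hb2
        _ ≤ l^(j+1) * ((C * rexp (c*s)) * (1 * rexp (-((l-c) * δ)))) := by
            apply mul_le_mul_of_nonneg_left _ (pow_pos hl0 _).le
            apply mul_le_mul_of_nonneg_left _ (by positivity)
            apply mul_le_mul_of_nonneg_right _ (exp_pos _).le
            rw [inv_le_one_iff₀]
            right; linarith
        _ = (C * rexp (c*s) * rexp (c*δ)) * (l^(j+1) * rexp (-l * δ)) := by
            rw [one_mul]
            rw [show -((l-c)*δ) = c*δ + (-l*δ) from by ring, Real.exp_add]
            ring
    · simpa using (aux_pow_exp (j+1) hδ).const_mul (C * rexp (c*s) * rexp (c*δ))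
  -- main part
  have hT1 : Tendsto (fun l => l^(j+1) * I1 l) atTop (𝓝 (L * (j.factorial : ℝ))) := by
    set G : ℝ → ℝ → ℝ := fun l v => Set.indicator (Set.Ioc (0:ℝ) (l * δ))
      (fun v => rexp (-v) * v^j * (fs (v / l) / (v / l)^j)) v with hGdef
    have key : ∀ l : ℝ, 0 < l → l^(j+1) * I1 l = ∫ v in Set.Ioi (0:ℝ), G l v := by
      intro l hl0
      have hlne : l ≠ 0 := hl0.ne'
      have e2 : I1 l = l⁻¹ * ∫ v in (0:ℝ)..(l*δ), rexp (-v) * fs (v / l) := by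
        have h := intervalIntegral.integral_comp_mul_left (a := (0:ℝ)) (b := δ)
          (f := fun v => rexp (-v) * fs (v / l)) hlne
        simp only [mul_zero, smul_eq_mul, mul_div_cancel_left₀ _ hlne] at h
        rw [← h]
        show (∫ u in Set.Ioc (0:ℝ) δ, rexp (-l * u) * fs u) = _
        rw [← intervalIntegral.integral_of_le hδ.le]
        apply intervalIntegral.integral_congr
        intro u _
        simp only [neg_mul]
      have e3 : l^(j+1) * I1 l = ∫ v in Set.Ioc (0:ℝ) (l*δ), l^j * (rexp (-v) * fs (v / l)) := by
        rw [e2]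
        rw [show l^(j+1) * (l⁻¹ * ∫ v in (0:ℝ)..(l*δ), rexp (-v) * fs (v / l))
            = l^j * ((l * l⁻¹) * ∫ v in (0:ℝ)..(l*δ), rexp (-v) * fs (v / l)) from by
          rw [pow_succ]; ring]
        rw [mul_inv_cancel₀ hlne, one_mul]
        rw [← intervalIntegral.integral_const_mul]
        rw [intervalIntegral.integral_of_le (by positivity : (0:ℝ) ≤ l * δ)]
      rw [e3]
      have e5 : (∫ v in Set.Ioi (0:ℝ), G l v)
          = ∫ v in Set.Ioc (0:ℝ) (l*δ), rexp (-v) * v^j * (fs (v / l) / (v / l)^j) := by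
        rw [hGdef]
        rw [setIntegral_indicator measurableSet_Ioc]
        congr 1
        rw [Set.inter_eq_self_of_subset_right Set.Ioc_subset_Ioi_self]
      rw [e5]
      apply setIntegral_congr_fun measurableSet_Ioc
      intro v hv
      have hv0 : 0 < v := hv.1
      simp only []
      field_simp
      have hlk : l ^ j * l⁻¹ ^ j = 1 := by rw [← mul_pow, mul_inv_cancel₀ hlne, one_pow]
      linear_combination (v^j * fs (v / l)) * hlk
    have hDCT : Tendsto (fun l => ∫ v in Set.Ioi (0:ℝ), G l v) atTop
        (𝓝 (∫ v in Set.Ioi (0:ℝ), rexp (-v) * v^j * L)) := by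
      apply tendsto_integral_filter_of_dominated_convergence
        (bound := fun v => (|L|+1) * (rexp (-v) * v^j))
      · filter_upwards with l
        apply Measurable.aestronglyMeasurable
        apply Measurable.indicator _ measurableSet_Ioc
        exact ((Real.measurable_exp.comp measurable_neg).mul
          (measurable_id.pow_const j)).mul
          ((hfs_meas.comp (measurable_id.div_const l)).div
            ((measurable_id.div_const l).pow_const j))
      · filter_upwards [eventually_gt_atTop (0:ℝ)] with l hl0
        rw [ae_restrict_iff' measurableSet_Ioi]
        filter_upwards with v hv
        by_cases hvin : v ∈ Set.Ioc (0:ℝ) (l * δ)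
        · rw [hGdef]
          simp only [Set.indicator_of_mem hvin]
          have hv0 : 0 < v := hvin.1
          have hvl : 0 < v / l := div_pos hv0 hl0
          have hvd : v / l ≤ δ := by
            rw [div_le_iff₀ hl0]
            calc v ≤ l * δ := hvin.2
              _ = δ * l := by ring
          rw [Real.norm_eq_abs, abs_mul, abs_mul, abs_of_pos (exp_pos _),
            abs_of_pos (pow_pos hv0 _)]
          calc rexp (-v) * v^j * |fs (v/l) / (v/l)^j|
              ≤ rexp (-v) * v^j * (|L| + 1) := by
                apply mul_le_mul_of_nonneg_left (hM _ hvl hvd) (by positivity)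
            _ = (|L|+1) * (rexp (-v) * v^j) := by ring
        · rw [hGdef]
          simp only [Set.indicator_of_notMem hvin]
          have hv0 : (0:ℝ) < v := hv
          simp only [norm_zero]
          positivity
      · apply Integrable.const_mul
        have hΓ := Real.GammaIntegral_convergent (s := (j:ℝ)+1) (by positivity)
        apply IntegrableOn.congr_fun hΓ _ measurableSet_Ioi
        intro x hx
        simp [Real.rpow_natCast]
      · rw [ae_restrict_iff' measurableSet_Ioi]
        filter_upwards with v hv
        have hv0 : (0:ℝ) < v := hv
        have h1 : Tendsto (fun l : ℝ => v / l) atTop (𝓝[>] (0:ℝ)) := by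
          rw [tendsto_nhdsWithin_iff]
          constructor
          · have := tendsto_inv_atTop_zero (𝕜 := ℝ)
            have h2 := this.const_mul v
            simp only [mul_zero] at h2
            apply h2.congr
            intro l
            rw [div_eq_mul_inv]
          · filter_upwards [eventually_gt_atTop (0:ℝ)] with l hl
            exact div_pos hv0 hl
        have h2 := hL.comp h1
        have h3 : Tendsto (fun l : ℝ => rexp (-v) * v^j * (fs (v/l) / (v/l)^j)) atTop
            (𝓝 (rexp (-v) * v^j * L)) := tendsto_const_nhds.mul h2
        apply Tendsto.congr' _ h3
        filter_upwards [eventually_ge_atTop (v/δ), eventually_gt_atTop (0:ℝ)] with l h4 h5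
        have hvin : v ∈ Set.Ioc (0:ℝ) (l * δ) := by
          refine ⟨hv0, ?_⟩
          rw [div_le_iff₀ hδ] at h4
          linarith [h4]
        rw [hGdef]
        simp only [Set.indicator_of_mem hvin]
    have hval : (∫ v in Set.Ioi (0:ℝ), rexp (-v) * v^j * L) = L * (j.factorial : ℝ) := by
      rw [integral_mul_const]
      have hg : (∫ v in Set.Ioi (0:ℝ), rexp (-v) * v^j) = (j.factorial : ℝ) := by
        have h1 := Real.Gamma_eq_integral (s := (j:ℝ)+1) (by positivity)
        have h2 : (∫ x in Set.Ioi (0:ℝ), rexp (-x) * x ^ ((j:ℝ)+1-1))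
            = ∫ x in Set.Ioi (0:ℝ), rexp (-x) * x^j := by
          apply setIntegral_congr_fun measurableSet_Ioi
          intro x _
          simp [Real.rpow_natCast]
        rw [h2] at h1
        rw [← h1, Real.Gamma_nat_eq_factorial]
      rw [hg, mul_comm]
    rw [← hval]
    apply Tendsto.congr' _ hDCT
    filter_upwards [eventually_gt_atTop (0:ℝ)] with l hl0
    exact (key l hl0).symm
  have hfin := hT1.add hT2
  rw [add_zero] at hfin
  apply Tendsto.congr' _ hfin
  filter_upwards [eventually_gt_atTop c] with l hl
  rw [hEQ l hl]

lemma ra_shift {p : ℝ → ℝ} {x : ℝ} {a : ℕ → ℝ} {ε : ℝ}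
    (h : ∀ t ∈ Set.Ico x (x + ε), HasSum (fun i => a i * (t - x) ^ i) (p t)) :
    ∀ u ∈ Set.Ico (0:ℝ) ε, HasSum (fun i => a i * u ^ i) (p (x + u)) := by
  intro u hu
  have := h (x + u) ⟨by linarith [hu.1], by linarith [hu.2]⟩
  simpa using this

lemma ra_rc {p : ℝ → ℝ} (hpa : RightAnalytic p) (x : ℝ) (hx : 0 ≤ x) :
    Filter.Tendsto (fun u => p (x + u)) (𝓝[>] (0:ℝ)) (𝓝 (p x)) := by
  obtain ⟨a, ε, hε, h⟩ := hpa x hx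
  have h' := ra_shift h
  have h0 := PS hε h' 0 (fun i hi => absurd hi (Nat.not_lt_zero i))
  have hv : p (x + 0) = a 0 := PS_val hε h'
  rw [add_zero] at hv
  rw [← hv] at h0
  simpa using h0

lemma ra_cwa {p : ℝ → ℝ} (hpa : RightAnalytic p) (x : ℝ) (hx : 0 ≤ x) :
    ContinuousWithinAt p (Set.Ici x) x := by
  rw [← continuousWithinAt_Ioi_iff_Ici]
  have h0 := ra_rc hpa x hx
  have hshift : Tendsto (fun t : ℝ => t - x) (𝓝[Set.Ioi x] x) (𝓝[>] (0:ℝ)) := by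
    apply tendsto_nhdsWithin_of_tendsto_nhds_of_eventually_within
    · have h1 : Tendsto (fun t : ℝ => t - x) (𝓝 x) (𝓝 (x - x)) :=
        (continuous_id.sub continuous_const).tendsto x
      rw [sub_self] at h1
      exact h1.mono_left nhdsWithin_le_nhds
    · filter_upwards [self_mem_nhdsWithin] with t ht
      exact sub_pos.2 (Set.mem_Ioi.1 ht)
  have := h0.comp hshift
  apply this.congr
  intro t
  simp

lemma ra_meas {p : ℝ → ℝ} (hpa : RightAnalytic p) : Measurable (fun x => p (max x 0)) := by
  apply meas_of_rightCont
  intro x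
  rcases lt_or_ge x 0 with hx | hx
  · have heq : (fun y : ℝ => p (max y 0)) =ᶠ[𝓝 x] (fun _ => p 0) := by
      filter_upwards [Iio_mem_nhds hx] with y hy
      rw [max_eq_right hy.le]
    have : ContinuousAt (fun y : ℝ => p (max y 0)) x :=
      (continuousAt_congr heq).2 continuousAt_const
    exact this.continuousWithinAt
  · have h := ra_cwa hpa x hx
    apply h.congr
    · intro y hy
      rw [max_eq_left (le_trans hx hy)]
    · rw [max_eq_left hx]

theorem stmt10 (p q : ℝ → ℝ) (hpa : RightAnalytic p) (hqa : RightAnalytic q)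
    (hpe : ExpOrder p) (hqe : ExpOrder q) (hp0 : p 0 = 1)
    (n m : ℕ) (hm : 1 ≤ m) (hmn : m < n) (hcop : Nat.Coprime n m)
    (hpx : ∀ t > (0:ℝ), p t > ((m : ℝ) / n) ^ ((1 : ℝ) / ((n : ℝ) - m)))
    (hqx : ∀ t > (0:ℝ), q t ≥ ((m : ℝ) / n) ^ ((1 : ℝ) / ((n : ℝ) - m)))
    (hinf : sInf {x : ℝ | 0 < x ∧ p x ≠ 0} = 0)
    (hratio : ∃ Λ : ℝ, ∀ l ≥ Λ,
        lap (fun x => p x ^ n) l / lap (fun x => p x ^ m) l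
          = lap (fun x => q x ^ n) l / lap (fun x => q x ^ m) l) :
    ∀ x ≥ (0:ℝ), p x = q x := by
  classical
  by_contra hcon
  push_neg at hcon
  obtain ⟨x₁, hx₁0, hx₁⟩ := hcon
  set x₀ : ℝ := ((m : ℝ) / n) ^ ((1 : ℝ) / ((n : ℝ) - m)) with hx₀def
  have hn1 : 1 ≤ n := le_trans hm hmn.le
  have hn0 : 0 < (n:ℝ) := by exact_mod_cast Nat.pos_of_ne_zero (by omega)
  have hm0 : 0 < (m:ℝ) := by exact_mod_cast hm
  have hmn' : (m:ℝ) < (n:ℝ) := by exact_mod_cast hmn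
  have hmn1 : (0:ℝ) < (m:ℝ)/(n:ℝ) := by positivity
  have hmnlt : (m:ℝ)/(n:ℝ) < 1 := (div_lt_one hn0).2 hmn'
  have hexp0 : (0:ℝ) < 1 / ((n:ℝ) - m) := by
    apply div_pos one_pos; linarith
  have hx₀pos : 0 < x₀ := Real.rpow_pos_of_pos hmn1 _
  have hx₀lt1 : x₀ < 1 := Real.rpow_lt_one hmn1.le hmnlt hexp0
  have hx₀pow : x₀ ^ (n - m) = (m:ℝ)/(n:ℝ) := by
    rw [hx₀def, ← Real.rpow_natCast (((m:ℝ)/n) ^ ((1:ℝ)/((n:ℝ)-m))) (n - m),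
      ← Real.rpow_mul hmn1.le]
    rw [show ((1:ℝ)/((n:ℝ)-m)) * ((n - m : ℕ):ℝ) = 1 from ?_]
    · exact Real.rpow_one _
    · rw [Nat.cast_sub hmn.le, one_div, inv_mul_cancel₀]
      exact ne_of_gt (by linarith)
  have hkey : ∀ A : ℝ, x₀ < A → (m:ℝ) * A^(m-1) < (n:ℝ) * A^(n-1) := by
    intro A hA
    have hA0 : 0 < A := lt_trans hx₀pos hA
    have h1 : x₀ ^ (n-m) < A ^ (n-m) := pow_lt_pow_left₀ hA hx₀pos.le (by omega)
    rw [hx₀pow] at h1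
    have h2 : (m:ℝ) < (n:ℝ) * A^(n-m) := by
      rw [div_lt_iff₀ hn0] at h1
      nlinarith [h1]
    calc (m:ℝ) * A^(m-1) < ((n:ℝ) * A^(n-m)) * A^(m-1) :=
          mul_lt_mul_of_pos_right h2 (pow_pos hA0 _)
      _ = (n:ℝ) * A^(n-1) := by
          rw [mul_assoc, ← pow_add]
          congr 2
          omega
  have hgmono : StrictMonoOn (fun x : ℝ => x^n - x^m) (Set.Ici x₀) := by
    apply strictMonoOn_of_deriv_pos (convex_Ici x₀)
    · exact ((continuous_pow n).sub (continuous_pow m)).continuousOn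
    · intro x hx
      rw [interior_Ici] at hx
      have hd : deriv (fun x : ℝ => x^n - x^m) x = n*x^(n-1) - m*x^(m-1) := by
        rw [deriv_fun_sub (differentiable_pow n).differentiableAt
          (differentiable_pow m).differentiableAt, deriv_pow_field, deriv_pow_field]
      rw [hd]
      have := hkey x hx
      linarith
  -- measurable versions
  set P : ℝ → ℝ := fun x => p (max x 0) with hPdef
  set Q : ℝ → ℝ := fun x => q (max x 0) with hQdef
  have hPmeas : Measurable P := ra_meas hpa
  have hQmeas : Measurable Q := ra_meas hqa
  obtain ⟨cp, hcp, Cp, hCp, hpb⟩ := hpe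
  obtain ⟨cq, hcq, Cq, hCq, hqb⟩ := hqe
  set c₁ : ℝ := max cp cq with hc₁def
  set C₁ : ℝ := max (max Cp Cq) 1 with hC₁def
  have hc₁ : 0 < c₁ := lt_of_lt_of_le hcp (le_max_left _ _)
  have hC₁1 : (1:ℝ) ≤ C₁ := le_max_right _ _
  have hC₁0 : (0:ℝ) < C₁ := lt_of_lt_of_le one_pos hC₁1
  have hPb : ∀ x ≥ (0:ℝ), |P x| ≤ C₁ * rexp (c₁ * x) := by
    intro x hx
    rw [hPdef]
    simp only
    rw [max_eq_left hx]
    calc |p x| ≤ Cp * rexp (cp * x) := hpb x hx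
      _ ≤ C₁ * rexp (c₁ * x) := by
        apply mul_le_mul (le_trans (le_max_left Cp Cq) (le_max_left _ 1))
          (Real.exp_le_exp.2 (mul_le_mul_of_nonneg_right (le_max_left _ _) hx))
          (exp_pos _).le hC₁0.le
  have hQb : ∀ x ≥ (0:ℝ), |Q x| ≤ C₁ * rexp (c₁ * x) := by
    intro x hx
    rw [hQdef]
    simp only
    rw [max_eq_left hx]
    calc |q x| ≤ Cq * rexp (cq * x) := hqb x hx
      _ ≤ C₁ * rexp (c₁ * x) := by
        apply mul_le_mul (le_trans (le_max_right Cp Cq) (le_max_left _ 1))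
          (Real.exp_le_exp.2 (mul_le_mul_of_nonneg_right (le_max_right _ _) hx))
          (exp_pos _).le hC₁0.le
  set c₂ : ℝ := (n:ℝ) * c₁ with hc₂def
  have hc₂ : 0 < c₂ := by positivity
  set C₂ : ℝ := C₁ ^ n with hC₂def
  have hC₂0 : (0:ℝ) < C₂ := by positivity
  have hpow : ∀ (g : ℝ → ℝ), (∀ x ≥ (0:ℝ), |g x| ≤ C₁ * rexp (c₁ * x)) → ∀ k : ℕ, k ≤ n →
      ∀ x ≥ (0:ℝ), |g x ^ k| ≤ C₂ * rexp (c₂ * x) := by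
    intro g hg k hk x hx
    rw [abs_pow]
    calc |g x|^k ≤ (C₁ * rexp (c₁*x))^k := pow_le_pow_left₀ (abs_nonneg _) (hg x hx) k
      _ = C₁^k * rexp (c₁*x)^k := mul_pow _ _ _
      _ = C₁^k * rexp ((k:ℝ)*(c₁*x)) := by rw [← Real.exp_nat_mul]
      _ ≤ C₂ * rexp (c₂ * x) := by
          apply mul_le_mul (pow_le_pow_right₀ hC₁1 hk)
            (Real.exp_le_exp.2 ?_) (exp_pos _).le hC₂0.le
          rw [hc₂def]
          have hkn : (k:ℝ) ≤ (n:ℝ) := by exact_mod_cast hk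
          calc (k:ℝ)*(c₁*x) = ((k:ℝ)*c₁)*x := by ring
            _ ≤ ((n:ℝ)*c₁)*x := by
                apply mul_le_mul_of_nonneg_right _ hx
                exact mul_le_mul_of_nonneg_right hkn hc₁.le
  have hΔb : ∀ k : ℕ, k ≤ n → ∀ x ≥ (0:ℝ), |P x ^ k - Q x ^ k| ≤ (2*C₂) * rexp (c₂ * x) := by
    intro k hk x hx
    calc |P x ^ k - Q x ^ k| ≤ |P x ^ k| + |Q x ^ k| := abs_sub _ _
      _ ≤ C₂ * rexp (c₂*x) + C₂ * rexp (c₂*x) :=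
          add_le_add (hpow P hPb k hk x hx) (hpow Q hQb k hk x hx)
      _ = (2*C₂) * rexp (c₂*x) := by ring
  -- lap rewriting
  have hlapP : ∀ (k : ℕ) (l : ℝ), lap (fun x => p x ^ k) l
      = ∫ x in Set.Ioi (0:ℝ), rexp (-l * x) * P x ^ k := by
    intro k l
    apply setIntegral_congr_fun measurableSet_Ioi
    intro x hx
    rw [hPdef]
    simp only
    rw [max_eq_left (le_of_lt hx)]
  have hlapQ : ∀ (k : ℕ) (l : ℝ), lap (fun x => q x ^ k) l
      = ∫ x in Set.Ioi (0:ℝ), rexp (-l * x) * Q x ^ k := by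
    intro k l
    apply setIntegral_congr_fun measurableSet_Ioi
    intro x hx
    rw [hQdef]
    simp only
    rw [max_eq_left (le_of_lt hx)]
  -- positivity of Laplace transforms
  have hppos : ∀ x > (0:ℝ), 0 < P x := by
    intro x hx
    have := hpx x hx
    rw [hPdef]; simp only; rw [max_eq_left hx.le]
    linarith [hx₀pos]
  have hqpos : ∀ x > (0:ℝ), 0 < Q x := by
    intro x hx
    have := hqx x hx
    rw [hQdef]; simp only; rw [max_eq_left hx.le]
    linarith [hx₀pos]
  have hlap_pos : ∀ (R : ℝ → ℝ), Measurable R → (∀ x ≥ (0:ℝ), |R x| ≤ C₁ * rexp (c₁ * x)) →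
      (∀ x > (0:ℝ), 0 < R x) → ∀ (k : ℕ), k ≤ n → ∀ l > c₂,
      0 < ∫ x in Set.Ioi (0:ℝ), rexp (-l * x) * R x ^ k := by
    intro R hRm hRb hRpos k hk l hl
    have hint : IntegrableOn (fun x => rexp (-l * x) * R x ^ k) (Set.Ioi 0) :=
      lap_integrable (hRm.pow_const k) (hpow R hRb k hk) hl
    have hnn : 0 ≤ᵐ[volume.restrict (Set.Ioi (0:ℝ))] fun x => rexp (-l * x) * R x ^ k := by
      rw [Filter.EventuallyLE, ae_restrict_iff' measurableSet_Ioi]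
      filter_upwards with x hx
      simp only [Pi.zero_apply]
      exact le_of_lt (mul_pos (exp_pos _) (pow_pos (hRpos x hx) k))
    rw [setIntegral_pos_iff_support_of_nonneg_ae hnn hint]
    have hsupp : Function.support (fun x => rexp (-l * x) * R x ^ k) ∩ Set.Ioi 0
        = Set.Ioi (0:ℝ) := by
      apply Set.inter_eq_self_of_subset_right
      intro x hx
      exact ne_of_gt (mul_pos (exp_pos _) (pow_pos (hRpos x hx) k))
    rw [hsupp, Real.volume_Ioi]
    norm_num
  -- the difference set and its infimum
  set S : Set ℝ := {x | 0 ≤ x ∧ p x ≠ q x} with hSdef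
  have hSne : S.Nonempty := ⟨x₁, hx₁0, hx₁⟩
  have hSbd : BddBelow S := ⟨0, fun x hx => hx.1⟩
  set s := sInf S with hsdef
  have hs0 : 0 ≤ s := le_csInf hSne (fun x hx => hx.1)
  have hpq : ∀ x, 0 ≤ x → x < s → p x = q x := by
    intro x hx0 hxs
    by_contra hne
    exact absurd (csInf_le hSbd ⟨hx0, hne⟩) (not_le.2 hxs)
  obtain ⟨a, ε₁, hε₁, hAs⟩ := hpa s hs0
  obtain ⟨b, ε₂, hε₂, hBs⟩ := hqa s hs0
  set ε := min ε₁ ε₂ with hεdef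
  have hε : 0 < ε := lt_min hε₁ hε₂
  have hA' : ∀ u ∈ Set.Ico (0:ℝ) ε, HasSum (fun i => a i * u^i) (p (s+u)) :=
    fun u hu => ra_shift hAs u ⟨hu.1, lt_of_lt_of_le hu.2 (min_le_left _ _)⟩
  have hB' : ∀ u ∈ Set.Ico (0:ℝ) ε, HasSum (fun i => b i * u^i) (q (s+u)) :=
    fun u hu => ra_shift hBs u ⟨hu.1, lt_of_lt_of_le hu.2 (min_le_right _ _)⟩
  -- existence of a differing coefficient
  have hdiff : ∃ i, a i ≠ b i := by
    by_contra hall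
    push_neg at hall
    have hout : ∀ x ∈ S, s + ε ≤ x := by
      intro x hx
      by_contra hlt
      push_neg at hlt
      have hxs : s ≤ x := csInf_le hSbd hx
      have hxval : p x = q x := by
        have h1 := hA' (x - s) ⟨by linarith, by linarith⟩
        have h2 := hB' (x - s) ⟨by linarith, by linarith⟩
        have hxx : s + (x - s) = x := by ring
        rw [hxx] at h1 h2
        refine h1.unique ?_
        have : (fun i => a i * (x - s)^i) = (fun i => b i * (x - s)^i) :=
          funext (fun i => by rw [hall i])
        rw [this]
        exact h2
      exact hx.2 hxval
    have := le_csInf hSne hout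
    linarith
  set j₀ := Nat.find hdiff with hj₀def
  have hj₀spec : a j₀ ≠ b j₀ := Nat.find_spec hdiff
  have hj₀min : ∀ i < j₀, a i = b i := by
    intro i hi
    have := Nat.find_min hdiff hi
    exact not_not.1 this
  set d := a j₀ - b j₀ with hddef
  have hd : d ≠ 0 := sub_ne_zero.2 hj₀spec
  -- values at s
  set A := p s with hAdef
  set B := q s with hBdef
  have hps : A = a 0 := by
    have := PS_val hε hA'
    rw [add_zero] at this
    exact this
  have hqs : B = b 0 := by
    have := PS_val hε hB'
    rw [add_zero] at this
    exact this
  have hAx₀ : x₀ < A := by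
    rcases eq_or_lt_of_le hs0 with h | h
    · have : A = 1 := by rw [hAdef, ← h, hp0]
      rw [this]; exact hx₀lt1
    · exact hpx s h
  have hq0x : x₀ ≤ q 0 := by
    have hlim : Tendsto (fun u => q (0 + u)) (𝓝[>] (0:ℝ)) (𝓝 (q 0)) := ra_rc hqa 0 le_rfl
    apply ge_of_tendsto hlim
    filter_upwards [self_mem_nhdsWithin] with u hu
    exact hqx (0 + u) (by simpa using hu)
  have hBx₀ : x₀ ≤ B := by
    rcases eq_or_lt_of_le hs0 with h | h
    · rw [hBdef, ← h]; exact hq0x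
    · exact hqx s h
  -- limits of p, q at s from the right
  have hPlim : Tendsto (fun u => p (s + u)) (𝓝[>] (0:ℝ)) (𝓝 A) := ra_rc hpa s hs0
  have hQlim : Tendsto (fun u => q (s + u)) (𝓝[>] (0:ℝ)) (𝓝 B) := ra_rc hqa s hs0
  have hDlim : Tendsto (fun u => (p (s+u) - q (s+u)) / u ^ j₀) (𝓝[>] (0:ℝ)) (𝓝 d) := by
    have hc : ∀ u ∈ Set.Ico (0:ℝ) ε, HasSum (fun i => (a i - b i) * u ^ i)
        (p (s+u) - q (s+u)) := by
      intro u hu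
      have := (hA' u hu).sub (hB' u hu)
      have heq : (fun i => a i * u^i - b i * u^i) = (fun i => (a i - b i) * u ^ i) :=
        funext (fun i => by ring)
      rwa [heq] at this
    exact PS hε hc j₀ (fun i hi => by rw [hj₀min i hi]; ring)
  -- the geometric sums
  set Sk : ℕ → ℝ := fun k => ∑ i ∈ Finset.range k, A^i * B^(k-1-i) with hSkdef
  have hΔlim : ∀ k : ℕ, Tendsto (fun u => (P (s+u)^k - Q (s+u)^k) / u ^ j₀) (𝓝[>] (0:ℝ))
      (𝓝 (d * Sk k)) := by
    intro k
    have hG : Tendsto (fun u => ∑ i ∈ Finset.range k, p (s+u)^i * q (s+u)^(k-1-i))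
        (𝓝[>] (0:ℝ)) (𝓝 (Sk k)) :=
      tendsto_finset_sum _ (fun i _ => (hPlim.pow i).mul (hQlim.pow (k-1-i)))
    have hmul := hDlim.mul hG
    apply Tendsto.congr' _ hmul
    filter_upwards [self_mem_nhdsWithin] with u hu
    have hu0 : (0:ℝ) < u := hu
    have hsu : (0:ℝ) < s + u := by linarith
    have hPs : P (s+u) = p (s+u) := by rw [hPdef]; simp only; rw [max_eq_left hsu.le]
    have hQs : Q (s+u) = q (s+u) := by rw [hQdef]; simp only; rw [max_eq_left hsu.le]
    rw [hPs, hQs, div_mul_eq_mul_div, mul_comm (p (s+u) - q (s+u)) _, geom_sum₂_mul]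
  -- Watson for the differences
  have hW : ∀ k : ℕ, k ≤ n → Tendsto (fun l => rexp (l*s) * l^(j₀+1) *
      ∫ x in Set.Ioi (0:ℝ), rexp (-l*x) * (P x ^ k - Q x ^ k)) atTop
      (𝓝 (d * Sk k * (j₀.factorial : ℝ))) := by
    intro k hk
    apply watson _ ((hPmeas.pow_const k).sub (hQmeas.pow_const k)) hc₂ (hΔb k hk) hs0 _ j₀ _
      (hΔlim k)
    intro x hx
    have h1 : p x = q x := hpq x hx.1.le hx.2
    rw [hPdef, hQdef]
    simp only [Pi.sub_apply]
    rw [max_eq_left hx.1.le, h1, sub_self]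
  -- Watson for the initial values
  have hIV : ∀ (r : ℝ → ℝ) (hra : RightAnalytic r), (∀ x ≥ (0:ℝ),
      |r (max x 0)| ≤ C₁ * rexp (c₁ * x)) → ∀ k : ℕ, k ≤ n →
      Tendsto (fun l => l * ∫ x in Set.Ioi (0:ℝ), rexp (-l*x) * (r (max x 0)) ^ k) atTop
        (𝓝 (r 0 ^ k)) := by
    intro r hra hrb k hk
    have hrm : Measurable (fun x => r (max x 0)) := ra_meas hra
    have hlim0 : Tendsto (fun u => (fun x => r (max x 0) ^ k) ((0:ℝ) + u) / u ^ 0)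
        (𝓝[>] (0:ℝ)) (𝓝 (r 0 ^ k)) := by
      have h1 := (ra_rc hra 0 le_rfl).pow k
      apply Tendsto.congr' _ h1
      filter_upwards [self_mem_nhdsWithin] with u hu
      have hu0 : (0:ℝ) < u := hu
      simp only [pow_zero, div_one]
      rw [max_eq_left (by linarith : (0:ℝ) ≤ 0 + u)]
    have := watson (fun x => r (max x 0) ^ k) (hrm.pow_const k) hc₂
      (hpow _ hrb k hk) le_rfl (fun x hx => absurd hx (by simp)) 0 (r 0 ^ k) hlim0
    simp only [mul_zero, Real.exp_zero, one_mul, pow_one, zero_add, Nat.factorial_zero,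
      Nat.cast_one, mul_one] at this
    exact this
  -- lap-versions of the limits
  have hIVp : ∀ k : ℕ, k ≤ n → Tendsto (fun l => l * lap (fun x => p x ^ k) l) atTop
      (𝓝 (1:ℝ)) := by
    intro k hk
    have := hIV p hpa hPb k hk
    rw [show p 0 ^ k = 1 by rw [hp0, one_pow]] at this
    apply Tendsto.congr _ this
    intro l
    rw [hlapP k l]
  have hIVq : ∀ k : ℕ, k ≤ n → Tendsto (fun l => l * lap (fun x => q x ^ k) l) atTop
      (𝓝 (q 0 ^ k)) := by
    intro k hk
    have := hIV q hqa hQb k hk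
    apply Tendsto.congr _ this
    intro l
    rw [hlapQ k l]
  have hWlap : ∀ k : ℕ, k ≤ n → Tendsto (fun l => rexp (l*s) * l^(j₀+1) *
      (lap (fun x => p x ^ k) l - lap (fun x => q x ^ k) l)) atTop
      (𝓝 (d * Sk k * (j₀.factorial : ℝ))) := by
    intro k hk
    apply Tendsto.congr' _ (hW k hk)
    filter_upwards [eventually_gt_atTop c₂] with l hl
    have h1 : (∫ x in Set.Ioi (0:ℝ), rexp (-l*x) * (P x ^ k - Q x ^ k))
        = (∫ x in Set.Ioi (0:ℝ), rexp (-l*x) * P x ^ k)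
          - ∫ x in Set.Ioi (0:ℝ), rexp (-l*x) * Q x ^ k := by
      rw [← integral_sub (lap_integrable (hPmeas.pow_const k) (hpow P hPb k hk) hl)
        (lap_integrable (hQmeas.pow_const k) (hpow Q hQb k hk) hl)]
      apply setIntegral_congr_fun measurableSet_Ioi
      intro x _
      ring
    rw [h1, hlapP k l, hlapQ k l]
  -- cross-multiplied identity
  obtain ⟨Λ, hΛ⟩ := hratio
  have hcross : ∀ᶠ l in atTop, lap (fun x => p x ^ n) l * lap (fun x => q x ^ m) l
      = lap (fun x => q x ^ n) l * lap (fun x => p x ^ m) l := by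
    filter_upwards [eventually_ge_atTop Λ, eventually_gt_atTop c₂] with l hlΛ hlc
    have hpm : 0 < lap (fun x => p x ^ m) l := by
      rw [hlapP m l]; exact hlap_pos P hPmeas hPb hppos m hmn.le l hlc
    have hqm : 0 < lap (fun x => q x ^ m) l := by
      rw [hlapQ m l]; exact hlap_pos Q hQmeas hQb hqpos m hmn.le l hlc
    have := hΛ l hlΛ
    rw [div_eq_div_iff (ne_of_gt hpm) (ne_of_gt hqm)] at this
    linarith [this]
  -- q 0 = 1
  have hq0pos : 0 < q 0 := lt_of_lt_of_le hx₀pos hq0x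
  have hq01 : q 0 = 1 := by
    have hE1 : ∀ᶠ l in atTop, (l * lap (fun x => p x ^ n) l) * (l * lap (fun x => q x ^ m) l)
        = (l * lap (fun x => q x ^ n) l) * (l * lap (fun x => p x ^ m) l) := by
      filter_upwards [hcross] with l hl
      calc (l * lap (fun x => p x ^ n) l) * (l * lap (fun x => q x ^ m) l)
          = l^2 * (lap (fun x => p x ^ n) l * lap (fun x => q x ^ m) l) := by ring
        _ = l^2 * (lap (fun x => q x ^ n) l * lap (fun x => p x ^ m) l) := by rw [hl]
        _ = (l * lap (fun x => q x ^ n) l) * (l * lap (fun x => p x ^ m) l) := by ring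
    have hL1 := (hIVp n le_rfl).mul (hIVq m hmn.le)
    have hL2 := (hIVq n le_rfl).mul (hIVp m hmn.le)
    have := tendsto_nhds_unique (hL1.congr' hE1) hL2
    rw [one_mul, mul_one] at this
    -- q 0 ^ m = q 0 ^ n
    rcases lt_trichotomy (q 0) 1 with h | h | h
    · exfalso
      have : q 0 ^ n < q 0 ^ m := pow_lt_pow_right_of_lt_one₀ hq0pos h hmn
      linarith [this, ‹q 0 ^ m = q 0 ^ n›]
    · exact h
    · exfalso
      have : q 0 ^ m < q 0 ^ n := pow_lt_pow_right₀ h hmn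
      linarith [this, ‹q 0 ^ m = q 0 ^ n›]
  -- main identity and conclusion S n = S m
  have hE2 : ∀ᶠ l in atTop,
      (rexp (l*s) * l^(j₀+1) * (lap (fun x => p x ^ n) l - lap (fun x => q x ^ n) l))
        * (l * lap (fun x => q x ^ m) l)
      = (rexp (l*s) * l^(j₀+1) * (lap (fun x => p x ^ m) l - lap (fun x => q x ^ m) l))
        * (l * lap (fun x => q x ^ n) l) := by
    filter_upwards [hcross] with l hl
    set apn := lap (fun x => p x ^ n) l
    set aqn := lap (fun x => q x ^ n) l
    set apm := lap (fun x => p x ^ m) l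
    set aqm := lap (fun x => q x ^ m) l
    set E := rexp (l*s) * l^(j₀+1) with hEdef
    calc (E*(apn - aqn))*(l*aqm) = E*l*(apn*aqm) - E*l*(aqn*aqm) := by ring
      _ = E*l*(aqn*apm) - E*l*(aqn*aqm) := by rw [hl]
      _ = (E*(apm - aqm))*(l*aqn) := by ring
  have hLn := (hWlap n le_rfl).mul (hIVq m hmn.le)
  have hLm := (hWlap m hmn.le).mul (hIVq n le_rfl)
  have hSnm := tendsto_nhds_unique (hLn.congr' hE2) hLm
  rw [hq01, one_pow, one_pow, mul_one, mul_one] at hSnm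
  have hfac : (0:ℝ) < (j₀.factorial : ℝ) := by exact_mod_cast j₀.factorial_pos
  have hSeq : Sk n = Sk m := by
    have h1 : d * Sk n = d * Sk m := by
      have := mul_right_cancel₀ (ne_of_gt hfac) hSnm
      exact this
    exact mul_left_cancel₀ hd h1
  -- contradiction
  have hAB : A = B := by
    by_contra hne
    have h1 : A^n - B^n = Sk n * (A - B) := (geom_sum₂_mul A B n).symm
    have h2 : A^m - B^m = Sk m * (A - B) := (geom_sum₂_mul A B m).symm
    have hg : A^n - A^m = B^n - B^m := by
      have : A^n - B^n = A^m - B^m := by rw [h1, h2, hSeq]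
      linarith
    have := hgmono.injOn (le_of_lt hAx₀) hBx₀
      (show (fun x:ℝ => x^n - x^m) A = (fun x:ℝ => x^n - x^m) B by simpa using hg)
    exact hne this
  -- now A = B, so Sk k = k * A^(k-1)
  have hSkval : ∀ k : ℕ, 1 ≤ k → Sk k = (k:ℝ) * A^(k-1) := by
    intro k hk
    rw [hSkdef]
    simp only [← hAB]
    rw [Finset.sum_congr rfl (fun i hi => ?_), Finset.sum_const, Finset.card_range,
      nsmul_eq_mul]
    rw [← pow_add]
    congr 1
    have := Finset.mem_range.1 hi
    omega
  rw [hSkval n hn1, hSkval m hm] at hSeq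
  have := hkey A hAx₀
  linarith [hSeq, this]
end

section
/- Let p(t) = t and q(t) = t − 2·1_{[1,∞)}(t) for t ≥ 0. Then for all λ > 0, ∫₀^∞ e^{-λt} p(t)² dt · ∫₀^∞ e^{-λt} q(t) dt = ∫₀^∞ e^{-λt} p(t) dt · ∫₀^∞ e^{-λt} q(t)² dt, even though p ≠ q. Thus H_{2,1} does not identify the càdlàg function p(t) = t. -/
open MeasureTheory Real Set Filter Asymptotics

lemma tendsto_pow_mul_exp (n : ℕ) {l : ℝ} (hl : 0 < l) :
    Tendsto (fun x : ℝ => x ^ n * Real.exp (-l * x)) atTop (nhds 0) := by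
  have h1 : Tendsto (fun x : ℝ => l * x) atTop atTop :=
    Filter.tendsto_id.const_mul_atTop hl
  have h2 := (Real.tendsto_pow_mul_exp_neg_atTop_nhds_zero n).comp h1
  have h3 := h2.div_const (l ^ n)
  rw [zero_div] at h3
  refine h3.congr (fun x => ?_)
  simp only [Function.comp_apply]
  rw [mul_pow]
  field_simp

lemma tendsto_exp_poly {l : ℝ} (hl : 0 < l) (c0 c1 c2 : ℝ) :
    Tendsto (fun x : ℝ => -Real.exp (-l * x) * (c2 * x ^ 2 + c1 * x + c0))
      atTop (nhds 0) := by
  have h2 := (tendsto_pow_mul_exp 2 hl).const_mul c2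
  have h1 := (tendsto_pow_mul_exp 1 hl).const_mul c1
  have h0 := (tendsto_pow_mul_exp 0 hl).const_mul c0
  have h := (((h2.add h1).add h0).neg)
  simp only [mul_zero, add_zero, neg_zero] at h
  refine h.congr (fun x => ?_)
  ring

lemma integrableOn_exp_pow {l : ℝ} (hl : 0 < l) (a : ℝ) (n : ℕ) :
    IntegrableOn (fun x : ℝ => Real.exp (-l * x) * x ^ n) (Set.Ioi a) := by
  apply integrable_of_isBigO_exp_neg (b := l / 2) (by linarith)
  · exact (Continuous.continuousOn (by continuity))
  · rw [Asymptotics.isBigO_iff]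
    refine ⟨1, ?_⟩
    have h := tendsto_pow_mul_exp n (l := l / 2) (by linarith)
    have hb := h.eventually (eventually_le_nhds (show (0:ℝ) < 1 by norm_num))
    filter_upwards [hb, eventually_ge_atTop (0:ℝ)] with x hx hx0
    have key : Real.exp (-l * x) * x ^ n =
        (x ^ n * Real.exp (-(l/2) * x)) * Real.exp (-(l/2) * x) := by
      rw [mul_comm, mul_assoc, ← Real.exp_add]; ring_nf
    rw [key, one_mul]
    calc ‖x ^ n * Real.exp (-(l/2) * x) * Real.exp (-(l/2) * x)‖
        = ‖x ^ n * Real.exp (-(l/2) * x)‖ * ‖Real.exp (-(l/2) * x)‖ := norm_mul _ _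
      _ ≤ 1 * ‖Real.exp (-(l/2) * x)‖ := by
          gcongr
          rw [Real.norm_eq_abs, abs_of_nonneg (by positivity)]; exact hx
      _ = ‖Real.exp (-(l/2) * x)‖ := one_mul _

lemma int_exp0 {l : ℝ} (hl : 0 < l) (a : ℝ) :
    ∫ x in Set.Ioi a, Real.exp (-l * x) = Real.exp (-l * a) / l := by
  have h := integral_Ioi_of_hasDerivAt_of_tendsto'
    (f := fun x => -Real.exp (-l * x) / l) (f' := fun x => Real.exp (-l * x))
    (a := a) (m := 0)
    (fun x _ => by
      have h1 : HasDerivAt (fun x : ℝ => -Real.exp (-l * x) / l)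
          (-(Real.exp (-l * x) * (-l * 1)) / l) x :=
        ((((hasDerivAt_id x).const_mul (-l)).exp).neg).div_const l
      refine h1.congr_deriv ?_
      field_simp)
    (by simpa using (integrableOn_exp_pow hl a 0))
    (by
      have := (tendsto_exp_poly hl (1 / l) 0 0)
      refine this.congr (fun x => ?_)
      field_simp
      ring)
  rw [h]; ring

lemma int_exp1 {l : ℝ} (hl : 0 < l) (a : ℝ) :
    ∫ x in Set.Ioi a, Real.exp (-l * x) * x
      = Real.exp (-l * a) * (a / l + 1 / l ^ 2) := by
  have h := integral_Ioi_of_hasDerivAt_of_tendsto'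
    (f := fun x => -Real.exp (-l * x) * (x / l + 1 / l ^ 2))
    (f' := fun x => Real.exp (-l * x) * x) (a := a) (m := 0)
    (fun x _ => by
      have h1 : HasDerivAt (fun x : ℝ => -Real.exp (-l * x))
          (-(Real.exp (-l * x) * (-l * 1))) x :=
        (((hasDerivAt_id x).const_mul (-l)).exp).neg
      have h2 : HasDerivAt (fun x : ℝ => x / l + 1 / l ^ 2) (1 / l) x :=
        ((hasDerivAt_id x).div_const l).add_const (1 / l ^ 2)
      have := h1.mul h2
      refine this.congr_deriv ?_
      field_simp
      ring)
    (by simpa using integrableOn_exp_pow hl a 1)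
    (by
      have := tendsto_exp_poly hl (1 / l ^ 2) (1 / l) 0
      refine this.congr (fun x => ?_)
      ring)
  rw [h]; ring

lemma int_exp2 {l : ℝ} (hl : 0 < l) (a : ℝ) :
    ∫ x in Set.Ioi a, Real.exp (-l * x) * x ^ 2
      = Real.exp (-l * a) * (a ^ 2 / l + 2 * a / l ^ 2 + 2 / l ^ 3) := by
  have h := integral_Ioi_of_hasDerivAt_of_tendsto'
    (f := fun x => -Real.exp (-l * x) * (x ^ 2 / l + 2 * x / l ^ 2 + 2 / l ^ 3))
    (f' := fun x => Real.exp (-l * x) * x ^ 2) (a := a) (m := 0)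
    (fun x _ => by
      have h1 : HasDerivAt (fun x : ℝ => -Real.exp (-l * x))
          (-(Real.exp (-l * x) * (-l * 1))) x :=
        (((hasDerivAt_id x).const_mul (-l)).exp).neg
      have h2 : HasDerivAt (fun x : ℝ => x ^ 2 / l + 2 * x / l ^ 2 + 2 / l ^ 3)
          (((2:ℕ):ℝ) * x ^ (2 - 1) / l + 2 * 1 / l ^ 2) x := (((hasDerivAt_pow 2 x).div_const l).add
          (((hasDerivAt_id x).const_mul 2).div_const (l ^ 2))).add_const (2 / l ^ 3)
      have := h1.mul h2
      refine this.congr_deriv ?_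
      push_cast
      field_simp
      ring)
    (integrableOn_exp_pow hl a 2)
    (by
      have := tendsto_exp_poly hl (2 / l ^ 3) (2 / l ^ 2) (1 / l)
      refine this.congr (fun x => ?_)
      ring)
  rw [h]; ring

theorem stmt15 :
    (∀ l > (0:ℝ),
        lap (fun t => t ^ 2) l
            * lap (fun t => t - 2 * Set.indicator (Set.Ici (1:ℝ)) (1 : ℝ → ℝ) t) l
          = lap (fun t => t) l
            * lap (fun t => (t - 2 * Set.indicator (Set.Ici (1:ℝ)) (1 : ℝ → ℝ) t) ^ 2) l) ∧
      (fun t : ℝ => t) ≠ fun t => t - 2 * Set.indicator (Set.Ici (1:ℝ)) (1 : ℝ → ℝ) t := by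
  constructor
  · intro l hl
    have hsub : Set.Ici (1:ℝ) ⊆ Set.Ioi 0 := fun x hx => Set.mem_Ioi.mpr (lt_of_lt_of_le one_pos (Set.mem_Ici.mp hx))
    have hE0 : IntegrableOn (fun x : ℝ => Real.exp (-l * x)) (Set.Ioi 0) := by
      simpa using integrableOn_exp_pow hl 0 0
    have hE1 : IntegrableOn (fun x : ℝ => Real.exp (-l * x) * x) (Set.Ioi 0) := by
      simpa using integrableOn_exp_pow hl 0 1
    have hE2 : IntegrableOn (fun x : ℝ => Real.exp (-l * x) * x ^ 2) (Set.Ioi 0) :=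
      integrableOn_exp_pow hl 0 2
    -- value of simple transforms
    have hP1 : lap (fun t => t) l = 1 / l ^ 2 := by
      unfold lap
      rw [int_exp1 hl 0]
      simp
    have hP2 : lap (fun t => t ^ 2) l = 2 / l ^ 3 := by
      unfold lap
      rw [int_exp2 hl 0]
      simp
    -- indicator helper
    have hind : ∀ g : ℝ → ℝ, IntegrableOn g (Set.Ioi 0) →
        ∫ x in Set.Ioi (0:ℝ), (Set.Ici (1:ℝ)).indicator g x = ∫ x in Set.Ioi (1:ℝ), g x := by
      intro g hg
      rw [setIntegral_indicator measurableSet_Ici,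
        Set.inter_eq_self_of_subset_right hsub, integral_Ici_eq_integral_Ioi]
    have hQ1 : lap (fun t => t - 2 * Set.indicator (Set.Ici (1:ℝ)) (1 : ℝ → ℝ) t) l
        = 1 / l ^ 2 - 2 * (Real.exp (-l) / l) := by
      unfold lap
      have heq : ∀ x : ℝ,
          Real.exp (-l * x) * (x - 2 * Set.indicator (Set.Ici (1:ℝ)) (1 : ℝ → ℝ) x)
            = Real.exp (-l * x) * x
              - (Set.Ici (1:ℝ)).indicator (fun x => 2 * Real.exp (-l * x)) x := by
        intro x
        by_cases hx : x ∈ Set.Ici (1:ℝ) <;>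
          simp [Set.indicator_of_mem, Set.indicator_of_notMem, hx] <;> ring
      rw [integral_congr_ae (Filter.Eventually.of_forall heq), integral_sub hE1
        ((hE0.const_mul 2).indicator measurableSet_Ici),
        hind _ (hE0.const_mul 2), MeasureTheory.integral_const_mul, int_exp1 hl 0,
        int_exp0 hl 1]
      simp
    have hQ2 : lap (fun t => (t - 2 * Set.indicator (Set.Ici (1:ℝ)) (1 : ℝ → ℝ) t) ^ 2) l
        = 2 / l ^ 3 - 4 * (Real.exp (-l) / l ^ 2) := by
      unfold lap
      have hg : IntegrableOn (fun x : ℝ => 4 * (Real.exp (-l * x) * x) - 4 * Real.exp (-l * x))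
          (Set.Ioi 0) := (hE1.const_mul 4).sub (hE0.const_mul 4)
      have heq : ∀ x : ℝ,
          Real.exp (-l * x) * (x - 2 * Set.indicator (Set.Ici (1:ℝ)) (1 : ℝ → ℝ) x) ^ 2
            = Real.exp (-l * x) * x ^ 2
              - (Set.Ici (1:ℝ)).indicator
                  (fun x => 4 * (Real.exp (-l * x) * x) - 4 * Real.exp (-l * x)) x := by
        intro x
        by_cases hx : x ∈ Set.Ici (1:ℝ) <;>
          simp [Set.indicator_of_mem, Set.indicator_of_notMem, hx] <;> ring
      have ha : IntegrableOn (fun x : ℝ => 4 * (Real.exp (-l * x) * x)) (Set.Ioi 1) := by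
        simpa [pow_one, IntegrableOn] using (integrableOn_exp_pow hl 1 1).const_mul 4
      have hb : IntegrableOn (fun x : ℝ => 4 * Real.exp (-l * x)) (Set.Ioi 1) := by
        simpa [IntegrableOn] using (integrableOn_exp_pow hl 1 0).const_mul 4
      rw [integral_congr_ae (Filter.Eventually.of_forall heq),
        integral_sub hE2 (hg.indicator measurableSet_Ici), hind _ hg,
        integral_sub ha hb, MeasureTheory.integral_const_mul, MeasureTheory.integral_const_mul,
        int_exp1 hl 1, int_exp0 hl 1, int_exp2 hl 0]
      have hlne : l ≠ 0 := ne_of_gt hl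
      field_simp
      rw [mul_zero, neg_zero, Real.exp_zero]
      ring
    rw [hP1, hP2, hQ1, hQ2]
    have hlne : l ≠ 0 := ne_of_gt hl
    field_simp
    ring
  · intro h
    have h1 := congrFun h 1
    simp [Set.indicator_of_mem, Set.mem_Ici] at h1
    norm_num at h1
end

section
/- Let p(t) = e^t for t ≥ 0 and q(t) = e^t for t ∈ [0,1) and q(t) = (e^{-1} − 1)e^t for t ≥ 1. Then for all sufficiently large λ, ∫₀^∞ e^{-λt} p(t)² dt / ∫₀^∞ e^{-λt} p(t) dt = ∫₀^∞ e^{-λt} q(t)² dt / ∫₀^∞ e^{-λt} q(t) dt, even though p ≠ q. -/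
open MeasureTheory Real Set Filter Asymptotics Topology

private lemma L1 (a : ℝ) {b : ℝ} (hb : b < 0) :
    ∫ x in Set.Ioi a, Real.exp (b * x) = -Real.exp (b * a) / b := by
  have hb' : 0 < -b := by linarith
  have hint : IntegrableOn (fun x : ℝ => Real.exp (b * x)) (Set.Ioi a) := by
    have := exp_neg_integrableOn_Ioi a hb'
    simpa using this
  have hderiv : ∀ x ∈ Set.Ici a,
      HasDerivAt (fun x : ℝ => Real.exp (b * x) / b) (Real.exp (b * x)) x := by
    intro x _
    have h := (((hasDerivAt_id x).const_mul b).exp).div_const b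
    have hbne : b ≠ 0 := ne_of_lt hb
    simpa [mul_comm, mul_div_assoc, mul_div_cancel_left₀, hbne] using h
  have htend : Tendsto (fun x : ℝ => Real.exp (b * x) / b) atTop (𝓝 0) := by
    have h1 : Tendsto (fun x : ℝ => b * x) atTop atBot :=
      tendsto_id.const_mul_atTop_of_neg hb
    have h2 : Tendsto (fun x : ℝ => Real.exp (b * x)) atTop (𝓝 0) :=
      Real.tendsto_exp_atBot.comp h1
    simpa using h2.div_const b
  have := integral_Ioi_of_hasDerivAt_of_tendsto' hderiv hint htend
  rw [this]; ring

open intervalIntegral in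
private lemma L2 {b : ℝ} (hb : b ≠ 0) :
    ∫ x in Set.Ioc (0:ℝ) 1, Real.exp (b * x) = (Real.exp b - 1) / b := by
  rw [← integral_of_le (zero_le_one)]
  rw [integral_comp_mul_left Real.exp hb]
  rw [mul_zero, mul_one, integral_exp, Real.exp_zero, smul_eq_mul]
  field_simp

theorem stmt16 :
    (∃ Λ : ℝ, ∀ l ≥ Λ,
        lap (fun t => Real.exp t ^ 2) l / lap (fun t => Real.exp t) l
          = lap (fun t => (if t < 1 then Real.exp t else (Real.exp (-1) - 1) * Real.exp t) ^ 2) l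
            / lap (fun t => if t < 1 then Real.exp t else (Real.exp (-1) - 1) * Real.exp t) l) ∧
      (fun t : ℝ => Real.exp t)
        ≠ fun t => if t < 1 then Real.exp t else (Real.exp (-1) - 1) * Real.exp t := by
  constructor
  · refine ⟨3, fun l hl => ?_⟩
    set c : ℝ := Real.exp (-1) - 1 with hc
    have h1 : (1:ℝ) - l < 0 := by linarith
    have h2 : (2:ℝ) - l < 0 := by linarith
    have hl1 : l - 1 ≠ 0 := by intro h; linarith [sub_eq_zero.mp h]
    have hl2 : l - 2 ≠ 0 := by intro h; linarith [sub_eq_zero.mp h]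
    -- lap p
    have hp : lap (fun t => Real.exp t) l = 1 / (l - 1) := by
      unfold lap
      have : ∀ x : ℝ, Real.exp (-l * x) * Real.exp x = Real.exp ((1 - l) * x) := by
        intro x; rw [← Real.exp_add]; ring_nf
      simp_rw [this]
      rw [L1 0 h1]
      rw [mul_zero, Real.exp_zero]; field_simp
      rw [← neg_div, neg_sub]; exact div_self (ne_of_lt h1)
    -- lap p^2
    have hp2 : lap (fun t => Real.exp t ^ 2) l = 1 / (l - 2) := by
      unfold lap
      have : ∀ x : ℝ, Real.exp (-l * x) * Real.exp x ^ 2 = Real.exp ((2 - l) * x) := by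
        intro x; rw [sq, ← Real.exp_add, ← Real.exp_add]; ring_nf
      simp_rw [this]
      rw [L1 0 h2]
      rw [mul_zero, Real.exp_zero]; field_simp
      rw [← neg_div, neg_sub]; exact div_self (ne_of_lt h2)
    set u : ℝ := Real.exp (1 - l) with hu
    set v : ℝ := Real.exp (2 - l) with hv
    have hsplit : ∀ g : ℝ → ℝ, IntegrableOn g (Set.Ioc (0:ℝ) 1) →
        IntegrableOn g (Set.Ioi (1:ℝ)) →
        ∫ x in Set.Ioi (0:ℝ), g x
          = (∫ x in Set.Ioc (0:ℝ) 1, g x) + ∫ x in Set.Ioi (1:ℝ), g x := by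
      intro g hg1 hg2
      rw [← Set.Ioc_union_Ioi_eq_Ioi (zero_le_one)]
      exact setIntegral_union (Set.Ioc_disjoint_Ioi le_rfl) measurableSet_Ioi hg1 hg2
    have hae : ∀ᵐ x : ℝ, x ≠ (1:ℝ) := by
      rw [ae_iff]
      simpa using measure_singleton (1:ℝ)
    have hint1 : ∀ b : ℝ, b < 0 → IntegrableOn (fun x : ℝ => Real.exp (b * x))
        (Set.Ioc (0:ℝ) 1) := by
      intro b hb
      have h0 : IntegrableOn (fun x : ℝ => Real.exp (b * x)) (Set.Ioi (0:ℝ)) := by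
        have := exp_neg_integrableOn_Ioi 0 (by linarith : 0 < -b)
        simpa using this
      exact h0.mono_set Set.Ioc_subset_Ioi_self
    have hint2 : ∀ b : ℝ, b < 0 → IntegrableOn (fun x : ℝ => Real.exp (b * x))
        (Set.Ioi (1:ℝ)) := by
      intro b hb
      have := exp_neg_integrableOn_Ioi 1 (by linarith : 0 < -b)
      simpa using this
    -- lap q
    have hq : lap (fun t => if t < 1 then Real.exp t else c * Real.exp t) l
        = (1 + (c - 1) * u) / (l - 1) := by
      unfold lap
      set g : ℝ → ℝ := fun x => Real.exp (-l * x) *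
        (if x < 1 then Real.exp x else c * Real.exp x) with hg
      have haeIoc : g =ᵐ[volume.restrict (Set.Ioc (0:ℝ) 1)]
          (fun x => Real.exp ((1 - l) * x)) := by
        filter_upwards [ae_restrict_mem measurableSet_Ioc, ae_restrict_of_ae hae]
          with x hx hne
        have hx1 : x < 1 := lt_of_le_of_ne hx.2 hne
        simp only [hg, if_pos hx1]
        rw [← Real.exp_add]; ring_nf
      have heq2 : Set.EqOn (fun x => c * Real.exp ((1 - l) * x)) g (Set.Ioi (1:ℝ)) := by
        intro x hx
        have : ¬ x < 1 := not_lt.mpr (le_of_lt hx)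
        simp only [hg, if_neg this]
        rw [show (1 - l) * x = -l * x + x by ring, Real.exp_add]; ring
      have hI1 : IntegrableOn g (Set.Ioc (0:ℝ) 1) :=
        (Integrable.congr (hint1 _ h1) haeIoc.symm)
      have hI2 : IntegrableOn g (Set.Ioi (1:ℝ)) :=
        IntegrableOn.congr_fun ((hint2 _ h1).const_mul c) heq2 measurableSet_Ioi
      rw [hsplit g hI1 hI2]
      rw [integral_congr_ae haeIoc, L2 (ne_of_lt h1)]
      rw [← setIntegral_congr_fun measurableSet_Ioi heq2]
      rw [integral_const_mul, L1 1 h1, mul_one]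
      rw [← hu]
      have e1 : (u - 1) / (1 - l) = (1 - u) / (l - 1) := by
        rw [div_eq_div_iff (ne_of_lt h1) hl1]; ring
      have e2 : -u / (1 - l) = u / (l - 1) := by
        rw [div_eq_div_iff (ne_of_lt h1) hl1]; ring
      rw [e1, e2]; ring
    -- lap q^2
    have hq2 : lap (fun t => (if t < 1 then Real.exp t else c * Real.exp t) ^ 2) l
        = (1 + (c ^ 2 - 1) * v) / (l - 2) := by
      unfold lap
      set g : ℝ → ℝ := fun x => Real.exp (-l * x) *
        (if x < 1 then Real.exp x else c * Real.exp x) ^ 2 with hg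
      have haeIoc : g =ᵐ[volume.restrict (Set.Ioc (0:ℝ) 1)]
          (fun x => Real.exp ((2 - l) * x)) := by
        filter_upwards [ae_restrict_mem measurableSet_Ioc, ae_restrict_of_ae hae]
          with x hx hne
        have hx1 : x < 1 := lt_of_le_of_ne hx.2 hne
        simp only [hg, if_pos hx1]
        rw [sq, ← Real.exp_add, ← Real.exp_add]; ring_nf
      have heq2 : Set.EqOn (fun x => c ^ 2 * Real.exp ((2 - l) * x)) g (Set.Ioi (1:ℝ)) := by
        intro x hx
        have : ¬ x < 1 := not_lt.mpr (le_of_lt hx)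
        simp only [hg, if_neg this, mul_pow, pow_two (Real.exp x)]
        rw [← Real.exp_add, show (2 - l) * x = -l * x + (x + x) by ring, Real.exp_add]; ring
      have hI1 : IntegrableOn g (Set.Ioc (0:ℝ) 1) :=
        (Integrable.congr (hint1 _ h2) haeIoc.symm)
      have hI2 : IntegrableOn g (Set.Ioi (1:ℝ)) :=
        IntegrableOn.congr_fun ((hint2 _ h2).const_mul (c ^ 2)) heq2 measurableSet_Ioi
      rw [hsplit g hI1 hI2]
      rw [integral_congr_ae haeIoc, L2 (ne_of_lt h2)]
      rw [← setIntegral_congr_fun measurableSet_Ioi heq2]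
      rw [integral_const_mul, L1 1 h2, mul_one]
      rw [← hv]
      have e1 : (v - 1) / (2 - l) = (1 - v) / (l - 2) := by
        rw [div_eq_div_iff (ne_of_lt h2) hl2]; ring
      have e2 : -v / (2 - l) = v / (l - 2) := by
        rw [div_eq_div_iff (ne_of_lt h2) hl2]; ring
      rw [e1, e2]; ring
    rw [hp, hp2, hq, hq2]
    have hE : Real.exp 1 * Real.exp (-1) = 1 := by
      rw [← Real.exp_add]; norm_num
    have hv' : v = Real.exp 1 * u := by
      rw [hu, hv, ← Real.exp_add]; congr 1; ring
    have key : 1 + (c ^ 2 - 1) * v = 1 + (c - 1) * u := by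
      rw [hv', hc]
      linear_combination u * (Real.exp (-1) - 2) * hE
    rw [key]
    have hu_pos : 0 < u := Real.exp_pos _
    have hu_le : u ≤ Real.exp (-2) := Real.exp_le_exp.mpr (by linarith)
    have he3 : (3:ℝ) ≤ Real.exp 2 := by nlinarith [Real.add_one_le_exp (2:ℝ)]
    have he2 : Real.exp (-2) ≤ 1/3 := by
      rw [Real.exp_neg]
      rw [inv_le_comm₀ (Real.exp_pos 2) (by norm_num)]
      linarith
    have ha : 0 < Real.exp (-1) := Real.exp_pos _
    have hK : (0:ℝ) < 1 + (c - 1) * u := by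
      rw [hc]; nlinarith
    rw [div_div_div_comm, div_div_div_comm (1 + (c - 1) * u)]
    rw [div_self (ne_of_gt hK)]
    norm_num
  · intro h
    have h1 := congrFun h 1
    simp only [lt_irrefl, if_false] at h1
    have he : Real.exp (-1) < 1 := by
      have := Real.exp_lt_one_iff.mpr (by norm_num : (-1:ℝ) < 0)
      exact this
    nlinarith [Real.exp_pos 1]
end

section
/- Let a ≠ 0 be a real number, T > 0, c ∈ ℝ satisfy c^n − c^m = e^{−naT} − e^{−maT} with n > m ≥ 1 integers. Define p(t) = e^{−at}(1_{[0,T)}(t) + c e^{aT} 1_{[T,∞)}(t)) and f(t) = e^{−at}. Then for all sufficiently large λ, ∫₀^∞ e^{-λt} p(t)^n dt / ∫₀^∞ e^{-λt} p(t)^m dt = (λ + ma)/(λ + na) = ∫₀^∞ e^{-λt} f(t)^n dt / ∫₀^∞ e^{-λt} f(t)^m dt. -/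
open MeasureTheory Real Set Filter Asymptotics
open scoped Topology

lemma exp_int_Ioi (b s : ℝ) (hb : 0 < b) :
    ∫ x in Set.Ioi s, Real.exp (-b * x) = Real.exp (-b * s) / b := by
  have hderiv : ∀ x ∈ Set.Ici s,
      HasDerivAt (fun x => -Real.exp (-b * x) / b) (Real.exp (-b * x)) x := by
    intro x _
    have h1 : HasDerivAt (fun x : ℝ => -b * x) (-b) x := by
      simpa using (hasDerivAt_id x).const_mul (-b)
    have h2 := (h1.exp.neg.div_const b)
    rw [mul_neg, neg_neg, mul_div_assoc, div_self hb.ne', mul_one] at h2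
    exact h2
  have hlim : Tendsto (fun x => -Real.exp (-b * x) / b) atTop (𝓝 0) := by
    have : Tendsto (fun x => -Real.exp (-b * x) / b) atTop (𝓝 (-0 / b)) := by
      refine Tendsto.div_const (Tendsto.neg ?_) _
      exact tendsto_exp_atBot.comp (tendsto_id.const_mul_atTop_of_neg (neg_neg_iff_pos.2 hb))
    simpa using this
  have := integral_Ioi_of_hasDerivAt_of_tendsto' hderiv (exp_neg_integrableOn_Ioi s hb) hlim
  rw [this]; ring

lemma exp_int_Ioo (b T : ℝ) (hb : b ≠ 0) (hT : 0 ≤ T) :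
    ∫ x in Set.Ioo (0:ℝ) T, Real.exp (-b * x) = (1 - Real.exp (-b * T)) / b := by
  rw [← MeasureTheory.integral_Ioc_eq_integral_Ioo, ← intervalIntegral.integral_of_le hT]
  have h : (∫ x in (0:ℝ)..T, Real.exp (-b * x)) = (-b)⁻¹ • ∫ x in (-b*0)..(-b*T), Real.exp x :=
    intervalIntegral.integral_comp_mul_left Real.exp (neg_ne_zero.mpr hb)
  rw [h, integral_exp, smul_eq_mul, inv_neg, neg_mul, mul_sub, neg_sub,
    div_eq_inv_mul, mul_sub]
  simp

lemma lap_f_eq (a l : ℝ) (k : ℕ) (h : 0 < l + k * a) :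
    lap (fun t => Real.exp (-a * t) ^ k) l = 1 / (l + k * a) := by
  unfold lap
  have h1 : ∀ x : ℝ, Real.exp (-l * x) * Real.exp (-a * x) ^ k
      = Real.exp (-(l + k * a) * x) := by
    intro x
    rw [← Real.exp_nat_mul, ← Real.exp_add]
    congr 1; ring
  simp only [h1]
  rw [exp_int_Ioi _ _ h]
  simp

lemma lap_p_eq (a T c l : ℝ) (hT : 0 < T) (k : ℕ) (hk : 0 < l + k * a)
    (p : ℝ → ℝ)
    (hp : ∀ t, p t = Real.exp (-a * t) *
        (Set.indicator (Set.Ico (0:ℝ) T) (1 : ℝ → ℝ) t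
          + c * Real.exp (a * T) * Set.indicator (Set.Ici T) (1 : ℝ → ℝ) t)) :
    lap (fun t => p t ^ k) l
      = (1 + (c ^ k - Real.exp (-(k:ℝ) * a * T)) * Real.exp (-l * T)) / (l + k * a) := by
  set b := l + k * a with hb
  unfold lap
  have key : ∀ x : ℝ, Real.exp (-l * x) * Real.exp (-a * x) ^ k = Real.exp (-b * x) := by
    intro x
    rw [← Real.exp_nat_mul, ← Real.exp_add]
    congr 1; rw [hb]; ring
  have hsplit : Set.Ioi (0:ℝ) = Set.Ioo 0 T ∪ Set.Ici T := (Set.Ioo_union_Ici_eq_Ioi hT).symm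
  have hdisj : Disjoint (Set.Ioo (0:ℝ) T) (Set.Ici T) := by
    rw [Set.disjoint_left]; intro x hx hx'; exact absurd hx.2 (not_lt.mpr hx')
  have hv1 : Set.EqOn (fun x => Real.exp (-l * x) * p x ^ k)
      (fun x => Real.exp (-b * x)) (Set.Ioo 0 T) := by
    intro x hx
    simp only
    rw [hp x, Set.indicator_of_mem (show x ∈ Set.Ico (0:ℝ) T from ⟨hx.1.le, hx.2⟩),
      Set.indicator_of_notMem (by simp only [Set.mem_Ici, not_le]; exact hx.2)]
    simp only [Pi.one_apply, mul_zero, add_zero, mul_one]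
    exact key x
  have hv2 : Set.EqOn (fun x => Real.exp (-l * x) * p x ^ k)
      (fun x => (c * Real.exp (a * T)) ^ k * Real.exp (-b * x)) (Set.Ici T) := by
    intro x hx
    simp only
    rw [hp x, Set.indicator_of_notMem (by
        simp only [Set.mem_Ico, not_and, not_lt]; intro _; exact hx),
      Set.indicator_of_mem hx]
    simp only [Pi.one_apply, mul_one, zero_add]
    calc Real.exp (-l * x) * (Real.exp (-a * x) * (c * Real.exp (a * T))) ^ k
        = (Real.exp (-l * x) * Real.exp (-a * x) ^ k) * (c * Real.exp (a * T)) ^ k := by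
          rw [mul_pow]; ring
      _ = (c * Real.exp (a * T)) ^ k * Real.exp (-b * x) := by rw [key x]; ring
  have hint1 : IntegrableOn (fun x => Real.exp (-l * x) * p x ^ k) (Set.Ioo 0 T) := by
    refine IntegrableOn.congr_fun ?_ (fun x hx => (hv1 hx).symm) measurableSet_Ioo
    exact ((Real.continuous_exp.comp
      (continuous_const.mul continuous_id)).integrableOn_Icc).mono_set Set.Ioo_subset_Icc_self
  have hint2 : IntegrableOn (fun x => Real.exp (-l * x) * p x ^ k) (Set.Ici T) := by
    refine IntegrableOn.congr_fun ?_ (fun x hx => (hv2 hx).symm) measurableSet_Ici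
    rw [integrableOn_Ici_iff_integrableOn_Ioi]
    exact (exp_neg_integrableOn_Ioi T hk).const_mul _
  rw [hsplit, setIntegral_union hdisj measurableSet_Ici hint1 hint2,
    setIntegral_congr_fun measurableSet_Ioo hv1,
    setIntegral_congr_fun measurableSet_Ici hv2,
    MeasureTheory.integral_Ici_eq_integral_Ioi, integral_const_mul,
    exp_int_Ioo b T hk.ne' hT.le, exp_int_Ioi b T hk]
  have e1 : Real.exp (-b * T) = Real.exp (-(k:ℝ) * a * T) * Real.exp (-l * T) := by
    rw [← Real.exp_add]; congr 1; rw [hb]; ring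
  have e2 : (c * Real.exp (a * T)) ^ k * Real.exp (-b * T)
      = c ^ k * Real.exp (-l * T) := by
    rw [mul_pow, ← Real.exp_nat_mul, mul_assoc, ← Real.exp_add]
    congr 2
    rw [hb]; ring
  rw [← mul_div_assoc, ← add_div]
  congr 1
  rw [e1] at e2 ⊢
  rw [e2]; ring

theorem stmt17 (a : ℝ) (ha : a ≠ 0) (T : ℝ) (hT : 0 < T)
    (n m : ℕ) (hm : 1 ≤ m) (hmn : m < n)
    (c : ℝ)
    (hc : c ^ n - c ^ m = Real.exp (-(n : ℝ) * a * T) - Real.exp (-(m : ℝ) * a * T))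
    (p f : ℝ → ℝ)
    (hp : ∀ t, p t = Real.exp (-a * t) *
        (Set.indicator (Set.Ico (0:ℝ) T) (1 : ℝ → ℝ) t
          + c * Real.exp (a * T) * Set.indicator (Set.Ici T) (1 : ℝ → ℝ) t))
    (hf : ∀ t, f t = Real.exp (-a * t)) :
    ∃ Λ : ℝ, ∀ l ≥ Λ,
      lap (fun t => p t ^ n) l / lap (fun t => p t ^ m) l = (l + m * a) / (l + n * a) ∧
      (l + m * a) / (l + n * a)
        = lap (fun t => f t ^ n) l / lap (fun t => f t ^ m) l := by
  set D : ℝ := c ^ m - Real.exp (-(m:ℝ) * a * T) with hD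
  have hDn : c ^ n - Real.exp (-(n:ℝ) * a * T) = D := by rw [hD]; linarith [hc]
  refine ⟨max ((n:ℝ) * |a| + (m:ℝ) * |a| + 1) (Real.log (|D| + 1) / T + 1), ?_⟩
  intro l hl
  have hl1 : (n:ℝ) * |a| + (m:ℝ) * |a| + 1 ≤ l := le_trans (le_max_left _ _) hl
  have hl2 : Real.log (|D| + 1) / T + 1 ≤ l := le_trans (le_max_right _ _) hl
  have hmabs : -((m:ℝ) * |a|) ≤ (m:ℝ) * a := by
    nlinarith [neg_abs_le a, (Nat.cast_nonneg m : (0:ℝ) ≤ m)]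
  have hnabs : -((n:ℝ) * |a|) ≤ (n:ℝ) * a := by
    nlinarith [neg_abs_le a, (Nat.cast_nonneg n : (0:ℝ) ≤ n)]
  have hnn : (0:ℝ) ≤ (n:ℝ) * |a| := by positivity
  have hmm : (0:ℝ) ≤ (m:ℝ) * |a| := by positivity
  have hma : 0 < l + (m:ℝ) * a := by linarith
  have hna : 0 < l + (n:ℝ) * a := by linarith
  -- bound on D * exp(-l*T)
  have hEpos : 0 < Real.exp (-l * T) := Real.exp_pos _
  have hlog : Real.log (|D| + 1) < l * T := by
    have h1 : Real.log (|D| + 1) / T < l := by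
      have hTpos := hT
      nlinarith [div_nonneg (abs_nonneg D) hT.le]
    calc Real.log (|D| + 1) = Real.log (|D| + 1) / T * T := by field_simp
      _ < l * T := by exact mul_lt_mul_of_pos_right h1 hT
  have hElt : Real.exp (-l * T) < (|D| + 1)⁻¹ := by
    have h2 : (|D| + 1)⁻¹ = Real.exp (-Real.log (|D| + 1)) := by
      rw [Real.exp_neg, Real.exp_log (by positivity)]
    rw [h2, Real.exp_lt_exp]
    linarith
  have hDE : |D| * Real.exp (-l * T) < 1 := by
    have h3 : (|D| + 1) * (|D| + 1)⁻¹ = 1 := mul_inv_cancel₀ (by positivity)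
    nlinarith [abs_nonneg D, mul_lt_mul_of_pos_left hElt
      (show (0:ℝ) < |D| + 1 by positivity)]
  have hF : 0 < 1 + D * Real.exp (-l * T) := by
    have h4 := neg_abs_le (D * Real.exp (-l * T))
    rw [abs_mul, abs_of_pos hEpos] at h4
    linarith
  have hpn := lap_p_eq a T c l hT n hna p hp
  have hpm := lap_p_eq a T c l hT m hma p hp
  rw [hDn] at hpn
  rw [← hD] at hpm
  have hfn : (fun t => f t ^ n) = fun t => Real.exp (-a * t) ^ n := by
    funext t; rw [hf t]
  have hfm : (fun t => f t ^ m) = fun t => Real.exp (-a * t) ^ m := by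
    funext t; rw [hf t]
  constructor
  · rw [hpn, hpm, div_div_div_comm, div_self hF.ne', one_div_div]
  · rw [hfn, hfm, lap_f_eq a l n hna, lap_f_eq a l m hma, div_div_div_comm, one_div_one, one_div_div]
end

section
/- Let n > m ≥ 1 be integers, a > 0, b₀ = (m/n)^{1/(n−m)} and T₂ = (1/((n−m)a)) ln(n/m). Define p(t) = e^{−at} 1_{[0,T₂)}(t) + b₀ 1_{[T₂,∞)}(t) and f(t) = e^{−at}. Then b₀^n − b₀^m = e^{−naT₂} − e^{−maT₂} and n b₀^{n−m} = m, and for all sufficiently large λ, ∫₀^∞ e^{-λt} p(t)^n dt / ∫₀^∞ e^{-λt} p(t)^m dt = (λ + ma)/(λ + na). -/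
open MeasureTheory Real Set Filter Asymptotics

theorem stmt18 (n m : ℕ) (hm : 1 ≤ m) (hmn : m < n) (a : ℝ) (ha : 0 < a)
    (b₀ T₂ : ℝ)
    (hb₀ : b₀ = ((m : ℝ) / n) ^ ((1 : ℝ) / ((n : ℝ) - m)))
    (hT₂ : T₂ = (1 / (((n : ℝ) - m) * a)) * Real.log ((n : ℝ) / m))
    (p : ℝ → ℝ)
    (hp : ∀ t, p t = Real.exp (-a * t) * Set.indicator (Set.Ico (0:ℝ) T₂) (1 : ℝ → ℝ) t
        + b₀ * Set.indicator (Set.Ici T₂) (1 : ℝ → ℝ) t) :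
    b₀ ^ n - b₀ ^ m = Real.exp (-(n : ℝ) * a * T₂) - Real.exp (-(m : ℝ) * a * T₂) ∧
      (n : ℝ) * b₀ ^ (n - m) = m ∧
      ∃ Λ : ℝ, ∀ l ≥ Λ,
        lap (fun t => p t ^ n) l / lap (fun t => p t ^ m) l = (l + m * a) / (l + n * a) := by
  have hm0 : (0:ℝ) < m := by exact_mod_cast hm
  have hn0 : (0:ℝ) < n := by exact_mod_cast (hm.trans hmn.le)
  have hnm : (0:ℝ) < (n:ℝ) - m := by
    have : (m:ℝ) < n := by exact_mod_cast hmn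
    linarith
  have hlog : 0 < Real.log ((n:ℝ)/m) := by
    apply Real.log_pos
    rw [lt_div_iff₀ hm0]
    simpa using (show (m:ℝ) < n by exact_mod_cast hmn)
  have hT₂pos : 0 < T₂ := by
    rw [hT₂]
    apply mul_pos (by positivity) hlog
  have hbe : b₀ = Real.exp (-(a * T₂)) := by
    rw [hb₀, hT₂, Real.rpow_def_of_pos (div_pos hm0 hn0)]
    congr 1
    rw [Real.log_div hm0.ne' hn0.ne', Real.log_div hn0.ne' hm0.ne']
    field_simp
    ring
  have hpow : ∀ k : ℕ, b₀ ^ k = Real.exp (-((k:ℝ) * a * T₂)) := by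
    intro k
    rw [hbe, ← Real.exp_nat_mul]
    congr 1; ring
  have hkey : ((n:ℝ) - m) * a * T₂ = Real.log ((n:ℝ)/m) := by
    rw [hT₂]; field_simp
  have hconj2 : (n:ℝ) * b₀ ^ (n - m) = m := by
    rw [hpow (n - m), Nat.cast_sub hmn.le, hkey, ← Real.log_inv, Real.exp_log (by positivity)]
    field_simp
  refine ⟨by rw [hpow n, hpow m]; ring_nf, hconj2, 1, fun l hl => ?_⟩
  have hl0 : 0 < l := lt_of_lt_of_le one_pos hl
  -- the Laplace transform of p^k
  have lapval : ∀ k : ℕ, lap (fun t => p t ^ k) l =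
      (1 - b₀ ^ k * Real.exp (-(l * T₂))) / (l + k * a)
        + b₀ ^ k * Real.exp (-(l * T₂)) / l := by
    intro k
    have hc : 0 < l + k * a := by positivity
    have hEq1 : EqOn (fun x => Real.exp (-l * x) * p x ^ k)
        (fun x => Real.exp (-(l + k * a) * x)) (Ioo 0 T₂) := by
      intro x hx
      have h1 : (Ico (0:ℝ) T₂).indicator (1:ℝ→ℝ) x = 1 :=
        Set.indicator_of_mem (Set.mem_Ico.mpr ⟨hx.1.le, hx.2⟩) _
      have h2 : (Ici T₂).indicator (1:ℝ→ℝ) x = 0 :=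
        Set.indicator_of_notMem (by simpa using hx.2) _
      simp only [hp x, h1, h2, mul_one, mul_zero, add_zero]
      rw [← Real.exp_nat_mul, ← Real.exp_add]
      congr 1; ring
    have hEq2 : EqOn (fun x => Real.exp (-l * x) * p x ^ k)
        (fun x => b₀ ^ k * Real.exp (-l * x)) (Ici T₂) := by
      intro x hx
      have h1 : (Ico (0:ℝ) T₂).indicator (1:ℝ→ℝ) x = 0 :=
        Set.indicator_of_notMem (fun h => absurd h.2 (not_lt.mpr hx)) _
      have h2 : (Ici T₂).indicator (1:ℝ→ℝ) x = 1 := Set.indicator_of_mem hx _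
      simp only [hp x, h1, h2, mul_one, mul_zero, zero_add]
      ring
    have hint1 : IntegrableOn (fun x => Real.exp (-l * x) * p x ^ k) (Ioo 0 T₂) := by
      refine IntegrableOn.congr_fun ?_ hEq1.symm measurableSet_Ioo
      exact ((Real.continuous_exp.comp (continuous_const.mul continuous_id)).integrableOn_Icc
        ).mono_set Set.Ioo_subset_Icc_self
    have hint2 : IntegrableOn (fun x => Real.exp (-l * x) * p x ^ k) (Ici T₂) := by
      refine IntegrableOn.congr_fun ?_ hEq2.symm measurableSet_Ici
      rw [integrableOn_Ici_iff_integrableOn_Ioi]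
      exact (exp_neg_integrableOn_Ioi T₂ hl0).const_mul _
    have hdisj : Disjoint (Ioo (0:ℝ) T₂) (Ici T₂) := by
      rw [Set.disjoint_left]
      rintro x ⟨_, h2⟩ h3
      exact absurd h3 (not_le.mpr h2)
    have hsplit : Ioo (0:ℝ) T₂ ∪ Ici T₂ = Ioi (0:ℝ) := Set.Ioo_union_Ici_eq_Ioi hT₂pos
    have hEk : Real.exp (-(l + k * a) * T₂) = b₀ ^ k * Real.exp (-(l * T₂)) := by
      rw [hpow k, ← Real.exp_add]
      congr 1; ring
    rw [lap, ← hsplit, setIntegral_union hdisj measurableSet_Ici hint1 hint2,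
      setIntegral_congr_fun measurableSet_Ioo hEq1,
      setIntegral_congr_fun measurableSet_Ici hEq2]
    have hA : ∫ x in Ioo (0:ℝ) T₂, Real.exp (-(l + k * a) * x)
        = (1 - b₀ ^ k * Real.exp (-(l * T₂))) / (l + k * a) := by
      rw [← integral_Ioc_eq_integral_Ioo, ← intervalIntegral.integral_of_le hT₂pos.le]
      rw [intervalIntegral.integral_comp_mul_left (fun y => Real.exp y) (neg_ne_zero.mpr hc.ne')]
      rw [mul_zero, integral_exp, Real.exp_zero, smul_eq_mul, hEk, div_eq_mul_inv, inv_neg]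
      ring
    have hB : ∫ x in Ici T₂, b₀ ^ k * Real.exp (-l * x)
        = b₀ ^ k * Real.exp (-(l * T₂)) / l := by
      rw [integral_Ici_eq_integral_Ioi, MeasureTheory.integral_const_mul]
      simp only [neg_mul]
      rw [integral_comp_mul_left_Ioi (fun y => Real.exp (-y)) T₂ hl0,
        integral_exp_neg_Ioi, smul_eq_mul]
      rw [div_eq_mul_inv]
      ring
    rw [hA, hB]
  -- the key algebraic identity
  have nbm : (n:ℝ) * b₀ ^ n = m * b₀ ^ m := by
    have : (n:ℝ) * b₀ ^ (n - m) * b₀ ^ m = m * b₀ ^ m := by rw [hconj2]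
    rwa [mul_assoc, ← pow_add, Nat.sub_add_cancel hmn.le] at this
  have hb₀pos : 0 < b₀ := by rw [hbe]; exact Real.exp_pos _
  have hb₀lt1 : b₀ < 1 := by
    rw [hbe]
    exact Real.exp_lt_one_iff.mpr (by nlinarith)
  have hE1 : Real.exp (-(l * T₂)) ≤ 1 := Real.exp_le_one_iff.mpr (by nlinarith)
  have hEpos : 0 < Real.exp (-(l * T₂)) := Real.exp_pos _
  have hcm : (0:ℝ) < l + m * a := by positivity
  have hcn : (0:ℝ) < l + n * a := by positivity
  have hlt1 : b₀ ^ m * Real.exp (-(l * T₂)) < 1 := by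
    calc b₀ ^ m * Real.exp (-(l * T₂)) ≤ b₀ ^ m * 1 := by
          exact mul_le_mul_of_nonneg_left hE1 (by positivity)
      _ = b₀ ^ m := mul_one _
      _ < 1 := pow_lt_one₀ hb₀pos.le hb₀lt1 (by omega)
  have hlapm : 0 < lap (fun t => p t ^ m) l := by
    rw [lapval m]
    have h1 : 0 < (1 - b₀ ^ m * Real.exp (-(l * T₂))) / (l + m * a) :=
      div_pos (by linarith) hcm
    have h2 : 0 < b₀ ^ m * Real.exp (-(l * T₂)) / l := by positivity
    linarith
  rw [div_eq_div_iff hlapm.ne' hcn.ne']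
  calc lap (fun t => p t ^ n) l * (l + n * a)
      = 1 + a * ((n:ℝ) * b₀ ^ n) * Real.exp (-(l * T₂)) / l := by
        rw [lapval n]; field_simp; ring
    _ = 1 + a * ((m:ℝ) * b₀ ^ m) * Real.exp (-(l * T₂)) / l := by rw [nbm]
    _ = (l + m * a) * lap (fun t => p t ^ m) l := by
        rw [lapval m]; field_simp; ring
end
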